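/- arXiv:2304.14144 — 7 statements merged into one kernel-verified Lean document; each statement's English description precedes it below -/
import Mathlib

section
/- For all n ≥ l + k, the matrices E_π, as π ranges over all set partitions of [l+k], are linearly independent in Hom((ℝⁿ)^{⊗k}, (ℝⁿ)^{⊗l}). -/
open scoped Classical

/-- The matrix `E_π` associated to a set partition `π` of the `l` output positions and
`k` input positions. -/
noncomputable def Emat (n l k : ℕ) (π : Setoid (Fin l ⊕ Fin k)) :
    Matrix (Fin l → Fin n) (Fin k → Fin n) ℝ :=
  Matrix.of fun I J =>
    if ∀ x y, π.r x y → Sum.elim I J x = Sum.elim I J y then 1 else 0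

instance setoidFiniteAux {α : Type*} [Finite α] : Finite (Setoid α) :=
  Finite.of_injective (fun s : Setoid α => s.r) fun a b h =>
    Setoid.ext fun x y => iff_of_eq (congrFun (congrFun h x) y)

lemma exists_ker_eq (n l k : ℕ) (hn : l + k ≤ n) (σ : Setoid (Fin l ⊕ Fin k)) :
    ∃ f : Fin l ⊕ Fin k → Fin n, Setoid.ker f = σ := by
  haveI : Fintype (Quotient σ) := Fintype.ofFinite _
  have hcard : Fintype.card (Quotient σ) ≤ Fintype.card (Fin n) := by
    calc Fintype.card (Quotient σ) ≤ Fintype.card (Fin l ⊕ Fin k) :=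
          Fintype.card_le_of_surjective (Quotient.mk σ) fun q => Quotient.exists_rep q
      _ = l + k := by simp
      _ ≤ n := hn
      _ = Fintype.card (Fin n) := (Fintype.card_fin n).symm
  obtain ⟨e⟩ := Function.Embedding.nonempty_of_card_le hcard
  refine ⟨fun x => e ⟦x⟧, Setoid.ext fun x y => ?_⟩
  constructor
  · intro h
    have : e ⟦x⟧ = e ⟦y⟧ := h
    exact Quotient.eq.mp (e.injective this)
  · intro h
    show e ⟦x⟧ = e ⟦y⟧
    rw [Quotient.sound h]

lemma Emat_apply_ker (n l k : ℕ) (π : Setoid (Fin l ⊕ Fin k))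
    (f : Fin l ⊕ Fin k → Fin n) :
    Emat n l k π (f ∘ Sum.inl) (f ∘ Sum.inr) = if π ≤ Setoid.ker f then 1 else 0 := by
  have hel : Sum.elim (f ∘ Sum.inl) (f ∘ Sum.inr) = f := by
    ext x; cases x <;> rfl
  show (if ∀ x y, π.r x y → Sum.elim (f ∘ Sum.inl) (f ∘ Sum.inr) x
        = Sum.elim (f ∘ Sum.inl) (f ∘ Sum.inr) y then (1:ℝ) else 0) = _
  rw [hel]
  refine if_congr ?_ rfl rfl
  constructor
  · intro h; rw [Setoid.le_def]; intro x y hxy; exact Setoid.ker_def.mpr (h x y hxy)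
  · intro h x y hxy; exact Setoid.ker_def.mp (Setoid.le_def.mp h hxy)

/-- For all `n ≥ l + k`, the matrices `E_π`, as `π` ranges over all set partitions of
`[l+k]`, are linearly independent. -/
theorem Emat_linearIndependent (n l k : ℕ) (hn : l + k ≤ n) :
    LinearIndependent ℝ (fun π : Setoid (Fin l ⊕ Fin k) => Emat n l k π) := by
  rw [linearIndependent_iff']
  intro s g hsum π₀ hπ₀
  haveI : Fintype (Setoid (Fin l ⊕ Fin k)) := Fintype.ofFinite _
  set c : Setoid (Fin l ⊕ Fin k) → ℝ := fun π => if π ∈ s then g π else 0 with hc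
  have key : ∀ σ : Setoid (Fin l ⊕ Fin k),
      ∑ π ∈ Finset.univ.filter (· ≤ σ), c π = 0 := by
    intro σ
    obtain ⟨f, hf⟩ := exists_ker_eq n l k hn σ
    have h0 := congrFun (congrFun hsum (f ∘ Sum.inl)) (f ∘ Sum.inr)
    simp only [Finset.sum_apply, Matrix.sum_apply, Matrix.smul_apply, Matrix.zero_apply,
      smul_eq_mul] at h0
    have hEm : ∀ π ∈ s, g π * Emat n l k π (f ∘ Sum.inl) (f ∘ Sum.inr)
        = g π * (if π ≤ σ then (1:ℝ) else 0) := fun π _ => by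
      rw [Emat_apply_ker, hf]
    have h1 : ∑ π ∈ s, g π * (if π ≤ σ then (1:ℝ) else 0) = 0 :=
      (Finset.sum_congr rfl hEm).symm.trans h0
    have h2 : ∑ π ∈ s.filter (· ≤ σ), g π = 0 := by
      rw [Finset.sum_filter]
      calc ∑ π ∈ s, (if π ≤ σ then g π else 0)
          = ∑ π ∈ s, g π * (if π ≤ σ then (1:ℝ) else 0) :=
            Finset.sum_congr rfl fun π _ => by split <;> simp
        _ = 0 := h1
    rw [← h2]
    rw [Finset.sum_filter, Finset.sum_filter]
    rw [← Finset.sum_filter_add_sum_filter_not Finset.univ (· ∈ s)]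
    have hfil : Finset.univ.filter (· ∈ s) = s := by ext; simp
    rw [hfil]
    have : ∑ π ∈ Finset.univ.filter (· ∉ s), (if π ≤ σ then c π else 0) = 0 := by
      refine Finset.sum_eq_zero fun π hπ => ?_
      simp only [Finset.mem_filter] at hπ
      simp [hc, hπ.2]
    rw [this, add_zero]
    exact Finset.sum_congr rfl fun π hπ => by simp [hc, hπ]
  have zero : ∀ σ : Setoid (Fin l ⊕ Fin k), c σ = 0 := by
    intro σ
    induction σ using WellFoundedLT.induction with
    | _ σ ih =>
      have h := key σ
      have hsplit : Finset.univ.filter (· ≤ σ)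
          = insert σ (Finset.univ.filter (· < σ)) := by
        ext π
        simp only [Finset.mem_filter, Finset.mem_univ, true_and, Finset.mem_insert]
        constructor
        · intro h; rcases lt_or_eq_of_le h with h' | h'
          · exact Or.inr h'
          · exact Or.inl h'
        · rintro (rfl | h')
          · exact le_rfl
          · exact le_of_lt h'
      rw [hsplit, Finset.sum_insert (by simp)] at h
      have : ∑ π ∈ Finset.univ.filter (· < σ), c π = 0 :=
        Finset.sum_eq_zero fun π hπ => ih π (by simpa using hπ)
      rw [this, add_zero] at h
      exact h
  simpa [hc, hπ₀] using zero π₀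
end

section
/- The dimension of the space of Sₙ-equivariant linear maps from (ℝⁿ)^{⊗k} to (ℝⁿ)^{⊗l} equals Σ_{t=1}^{n} S(l+k, t), the number of set partitions of [l+k] into at most n blocks, for l+k ≥ 1. -/
open scoped Classical

/-- The Stirling numbers of the second kind, via the standard recurrence. -/
def stirlingSecond : ℕ → ℕ → ℕ
  | 0, 0 => 1
  | 0, _ + 1 => 0
  | _ + 1, 0 => 0
  | m + 1, t + 1 => (t + 1) * stirlingSecond m (t + 1) + stirlingSecond m t

/-- The matrix of the diagonal action of a permutation `g ∈ Sₙ` on the `k`-th tensor power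
of `ℝⁿ`, in the basis of standard basis tensors indexed by tuples. -/
noncomputable def permMat (n k : ℕ) (g : Equiv.Perm (Fin n)) :
    Matrix (Fin k → Fin n) (Fin k → Fin n) ℝ :=
  Matrix.of fun I J => if I = g ∘ J then 1 else 0

/-- The space `Hom_{Sₙ}((ℝⁿ)^{⊗k}, (ℝⁿ)^{⊗l})` of `Sₙ`-equivariant linear maps,
realised as a submodule of the space of matrices indexed by tuples. -/
noncomputable def equivariantSubmodule (n l k : ℕ) :
    Submodule ℝ (Matrix (Fin l → Fin n) (Fin k → Fin n) ℝ) where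
  carrier := {M | ∀ g : Equiv.Perm (Fin n), M * permMat n k g = permMat n l g * M}
  add_mem' := by
    intro a b ha hb g
    rw [Matrix.add_mul, Matrix.mul_add, ha g, hb g]
  zero_mem' := by
    intro g
    rw [Matrix.zero_mul, Matrix.mul_zero]
  smul_mem' := by
    intro c a ha g
    rw [Matrix.smul_mul, Matrix.mul_smul, ha g]

section Comb
variable {n : ℕ}

/-- canonical (restricted growth) tuples -/
def canon : {m : ℕ} → (Fin m → Fin n) → Prop
  | 0, _ => True
  | m + 1, f => canon (Fin.init f) ∧
      ((f (Fin.last m) : ℕ) ≤ (Finset.univ.image (Fin.init f)).card)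

@[simp] lemma canon_zero (f : Fin 0 → Fin n) : canon f := trivial

lemma canon_succ {m : ℕ} (f : Fin (m + 1) → Fin n) :
    canon f ↔ canon (Fin.init f) ∧
      ((f (Fin.last m) : ℕ) ≤ (Finset.univ.image (Fin.init f)).card) := Iff.rfl

lemma exists_fin_succ' {m : ℕ} (P : Fin (m+1) → Prop) :
    (∃ i, P i) ↔ (∃ j : Fin m, P j.castSucc) ∨ P (Fin.last m) := by
  constructor
  · rintro ⟨i, hi⟩
    rcases Fin.eq_castSucc_or_eq_last i with ⟨j, rfl⟩ | rfl
    · exact Or.inl ⟨j, hi⟩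
    · exact Or.inr hi
  · rintro (⟨j, hj⟩ | h)
    · exact ⟨_, hj⟩
    · exact ⟨_, h⟩

lemma image_snoc {m : ℕ} (g : Fin m → Fin n) (x : Fin n) :
    Finset.univ.image (Fin.snoc g x : Fin (m+1) → Fin n)
      = insert x (Finset.univ.image g) := by
  ext v
  simp only [Finset.mem_image, Finset.mem_insert, Finset.mem_univ, true_and,
    exists_fin_succ' (fun i => (Fin.snoc g x : Fin (m+1) → Fin n) i = v),
    Fin.snoc_castSucc, Fin.snoc_last]
  tauto

lemma image_succ {m : ℕ} (f : Fin (m+1) → Fin n) :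
    Finset.univ.image f = insert (f (Fin.last m)) (Finset.univ.image (Fin.init f)) := by
  conv_lhs => rw [← Fin.snoc_init_self f]
  exact image_snoc _ _

lemma canon_mem_iff : ∀ {m : ℕ} {f : Fin m → Fin n}, canon f → ∀ v : Fin n,
    (v ∈ Finset.univ.image f ↔ (v : ℕ) < (Finset.univ.image f).card) := by
  intro m
  induction m with
  | zero =>
    intro f _ v
    have h : (Finset.univ.image f) = (∅ : Finset (Fin n)) := by simp
    rw [h]; simp
  | succ m ih =>
    intro f hf v
    obtain ⟨h1, h2⟩ := hf
    rw [image_succ f]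
    by_cases hx : f (Fin.last m) ∈ Finset.univ.image (Fin.init f)
    · rw [Finset.insert_eq_self.2 hx]; exact ih h1 v
    · have hxc : (f (Fin.last m) : ℕ) = (Finset.univ.image (Fin.init f)).card := by
        rcases lt_or_eq_of_le h2 with h | h
        · exact absurd ((ih h1 _).2 h) hx
        · exact h
      rw [Finset.card_insert_of_notMem hx, Finset.mem_insert]
      constructor
      · rintro (rfl | hv)
        · omega
        · have := (ih h1 v).1 hv; omega
      · intro hv
        rcases Nat.lt_succ_iff_lt_or_eq.1 hv with h | h
        · exact Or.inr ((ih h1 v).2 h)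
        · exact Or.inl (Fin.ext (by omega))

lemma canon_unique {m : ℕ} : ∀ {f f' : Fin m → Fin n}, canon f → canon f' →
    (∃ g : Equiv.Perm (Fin n), f' = g ∘ f) → f' = f := by
  induction m with
  | zero => intro f f' _ _ _; funext i; exact i.elim0
  | succ m ih =>
    rintro f f' hf hf' ⟨g, rfl⟩
    obtain ⟨h1, h2⟩ := hf
    obtain ⟨h1', h2'⟩ := hf'
    have hinitc : Fin.init (⇑g ∘ f) = ⇑g ∘ Fin.init f := rfl
    have hinit : Fin.init (⇑g ∘ f) = Fin.init f := by
      rw [hinitc]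
      exact ih h1 (hinitc ▸ h1') ⟨g, rfl⟩
    rw [hinit] at h2'
    have hgfix : ∀ v ∈ Finset.univ.image (Fin.init f), g v = v := by
      intro v hv
      obtain ⟨j, -, hj⟩ := Finset.mem_image.1 hv
      have := congrFun hinit j
      rw [hinitc] at this
      rw [← hj]; exact this
    have hlast : g (f (Fin.last m)) = f (Fin.last m) := by
      by_cases hx : f (Fin.last m) ∈ Finset.univ.image (Fin.init f)
      · exact hgfix _ hx
      · have hxc : (f (Fin.last m) : ℕ) = (Finset.univ.image (Fin.init f)).card := by
          rcases lt_or_eq_of_le h2 with h | h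
          · exact absurd ((canon_mem_iff h1 _).2 h) hx
          · exact h
        by_cases hy : (g (f (Fin.last m)) : ℕ) < (Finset.univ.image (Fin.init f)).card
        · exfalso
          have hgx : g (f (Fin.last m)) ∈ Finset.univ.image (Fin.init f) :=
            (canon_mem_iff h1 _).2 hy
          have h3 : g (g (f (Fin.last m))) = g (f (Fin.last m)) := hgfix _ hgx
          have hxx : g (f (Fin.last m)) = f (Fin.last m) := g.injective h3
          exact hx (hxx ▸ hgx)
        · have : (g (f (Fin.last m)) : ℕ) = (Finset.univ.image (Fin.init f)).card :=
            le_antisymm h2' (not_lt.1 hy)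
          exact Fin.ext (by omega)
    funext i
    rcases Fin.eq_castSucc_or_eq_last i with ⟨j, rfl⟩ | rfl
    · exact congrFun hinit j
    · exact hlast

lemma canon_exists {m : ℕ} : ∀ f : Fin m → Fin n, ∃ g : Equiv.Perm (Fin n), canon (⇑g ∘ f) := by
  induction m with
  | zero => intro f; exact ⟨1, trivial⟩
  | succ m ih =>
    intro f
    obtain ⟨g, hg⟩ := ih (Fin.init f)
    have hinitc : Fin.init (⇑g ∘ f) = ⇑g ∘ Fin.init f := rfl
    by_cases hx : g (f (Fin.last m)) ∈ Finset.univ.image (⇑g ∘ Fin.init f)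
    · refine ⟨g, ?_⟩
      rw [canon_succ, hinitc]
      exact ⟨hg, ((canon_mem_iff hg _).1 hx).le⟩
    · have hcx : (Finset.univ.image (⇑g ∘ Fin.init f)).card ≤ (g (f (Fin.last m)) : ℕ) := by
        by_contra hlt
        exact hx ((canon_mem_iff hg _).2 (not_le.1 hlt))
      have hcn : (Finset.univ.image (⇑g ∘ Fin.init f)).card < n :=
        lt_of_le_of_lt hcx (g (f (Fin.last m))).2
      refine ⟨Equiv.swap (g (f (Fin.last m))) ⟨_, hcn⟩ * g, ?_⟩
      have hfix : Fin.init (⇑(Equiv.swap (g (f (Fin.last m))) ⟨_, hcn⟩ * g) ∘ f)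
          = ⇑g ∘ Fin.init f := by
        funext i
        show Equiv.swap _ _ (g (f i.castSucc)) = g (f i.castSucc)
        have hmem : g (f i.castSucc) ∈ Finset.univ.image (⇑g ∘ Fin.init f) :=
          Finset.mem_image.2 ⟨i, Finset.mem_univ _, rfl⟩
        have hlt := (canon_mem_iff hg _).1 hmem
        apply Equiv.swap_apply_of_ne_of_ne
        · intro h; rw [h] at hlt; omega
        · intro h
          have : (g (f i.castSucc) : ℕ) = (Finset.univ.image (⇑g ∘ Fin.init f)).card := by
            rw [h]
          omega
      rw [canon_succ, hfix]
      refine ⟨hg, ?_⟩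
      show ((Equiv.swap _ _ (g (f (Fin.last m))) : Fin n) : ℕ) ≤ _
      rw [Equiv.swap_apply_left]

end Comb


section Count
variable {n : ℕ}
noncomputable def C (n m t : ℕ) : ℕ :=
  Fintype.card {f : Fin m → Fin n // canon f ∧ (Finset.univ.image f).card = t}

noncomputable def ψ (n m t : ℕ) (htn : t + 1 ≤ n)
    (a : ({g : Fin m → Fin n // canon g ∧ (Finset.univ.image g).card = t+1} × Fin (t+1)) ⊕
      {g : Fin m → Fin n // canon g ∧ (Finset.univ.image g).card = t}) :
    {f : Fin (m+1) → Fin n // canon f ∧ (Finset.univ.image f).card = t+1} :=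
  match a with
  | Sum.inl p => ⟨Fin.snoc p.1.1 ⟨p.2.1, lt_of_lt_of_le p.2.2 htn⟩, by
      obtain ⟨⟨g, hg, hcard⟩, x⟩ := p
      have hmem : (⟨x.1, lt_of_lt_of_le x.2 htn⟩ : Fin n) ∈ Finset.univ.image g :=
        (canon_mem_iff hg _).2 (by rw [hcard]; exact x.2)
      refine ⟨?_, ?_⟩
      · rw [canon_succ]
        refine ⟨?_, ?_⟩
        · rw [Fin.init_snoc]; exact hg
        · rw [Fin.init_snoc, Fin.snoc_last]
          show (x.1 : ℕ) ≤ (Finset.univ.image g).card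
          rw [hcard]
          exact le_of_lt x.2
      · rw [image_snoc, Finset.insert_eq_self.2 hmem, hcard]⟩
  | Sum.inr q => ⟨Fin.snoc q.1 ⟨t, lt_of_lt_of_le (Nat.lt_succ_self t) htn⟩, by
      obtain ⟨g, hg, hcard⟩ := q
      have hnot : (⟨t, lt_of_lt_of_le (Nat.lt_succ_self t) htn⟩ : Fin n) ∉
          Finset.univ.image g := by
        intro hmem
        have := (canon_mem_iff hg _).1 hmem
        rw [hcard] at this
        exact absurd this (lt_irrefl t)
      refine ⟨?_, ?_⟩
      · rw [canon_succ]
        refine ⟨?_, ?_⟩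
        · rw [Fin.init_snoc]; exact hg
        · rw [Fin.init_snoc, Fin.snoc_last]
          show (t : ℕ) ≤ (Finset.univ.image g).card
          rw [hcard]
      · rw [image_snoc, Finset.card_insert_of_notMem hnot, hcard]⟩

lemma ψ_bijective (n m t : ℕ) (htn : t + 1 ≤ n) : Function.Bijective (ψ n m t htn) := by
  constructor
  · rintro (⟨⟨g, hg⟩, x⟩ | ⟨g, hg⟩) (⟨⟨g', hg'⟩, x'⟩ | ⟨g', hg'⟩) hab
    case left.inl.inl =>
        have hval := congrArg Subtype.val hab
        simp only [ψ] at hval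
        have hinit : g = g' := by
          have := congrArg Fin.init hval
          rwa [Fin.init_snoc, Fin.init_snoc] at this
        have hlast := congrArg (fun f => f (Fin.last m)) hval
        simp only [Fin.snoc_last] at hlast
        subst hinit
        have hxv : (x : ℕ) = (x' : ℕ) := congrArg (fun v : Fin n => (v : ℕ)) hlast
        have hx : x = x' := Fin.ext hxv
        subst hx
        rfl
    case left.inl.inr =>
        have hval := congrArg Subtype.val hab
        simp only [ψ] at hval
        have hinit : g = g' := by
          have := congrArg Fin.init hval
          rwa [Fin.init_snoc, Fin.init_snoc] at this
        exfalso
        have e1 := hg.2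
        have e2 := hg'.2
        rw [hinit] at e1
        omega
    case left.inr.inl =>
        have hval := congrArg Subtype.val hab
        simp only [ψ] at hval
        have hinit : g = g' := by
          have := congrArg Fin.init hval
          rwa [Fin.init_snoc, Fin.init_snoc] at this
        exfalso
        have e1 := hg.2
        have e2 := hg'.2
        rw [hinit] at e1
        omega
    case left.inr.inr =>
        have hval := congrArg Subtype.val hab
        simp only [ψ] at hval
        have hinit : g = g' := by
          have := congrArg Fin.init hval
          rwa [Fin.init_snoc, Fin.init_snoc] at this
        exact congrArg Sum.inr (Subtype.ext hinit)
  · rintro ⟨f, hf, hcard⟩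
    rw [canon_succ] at hf
    obtain ⟨h1, h2⟩ := hf
    rw [image_succ] at hcard
    by_cases hx : f (Fin.last m) ∈ Finset.univ.image (Fin.init f)
    · rw [Finset.insert_eq_self.2 hx] at hcard
      have hxlt : (f (Fin.last m) : ℕ) < t + 1 := by
        have := (canon_mem_iff h1 _).1 hx
        omega
      refine ⟨Sum.inl ⟨⟨Fin.init f, h1, hcard⟩, ⟨(f (Fin.last m) : ℕ), hxlt⟩⟩, ?_⟩
      apply Subtype.ext
      show Fin.snoc (Fin.init f) _ = f
      have : (⟨((f (Fin.last m) : ℕ)), _⟩ : Fin n) = f (Fin.last m) := Fin.ext rfl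
      rw [this, Fin.snoc_init_self]
    · rw [Finset.card_insert_of_notMem hx] at hcard
      have hcg : (Finset.univ.image (Fin.init f)).card = t := by omega
      have hxt : (f (Fin.last m) : ℕ) = t := by
        rcases lt_or_eq_of_le h2 with h | h
        · exact absurd ((canon_mem_iff h1 _).2 h) hx
        · omega
      refine ⟨Sum.inr ⟨Fin.init f, h1, hcg⟩, ?_⟩
      apply Subtype.ext
      show Fin.snoc (Fin.init f) _ = f
      have : (⟨t, lt_of_lt_of_le (Nat.lt_succ_self t) htn⟩ : Fin n) = f (Fin.last m) :=
        Fin.ext (by simpa using hxt.symm)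
      rw [this, Fin.snoc_init_self]

lemma C_eq (n : ℕ) : ∀ m t : ℕ, t ≤ n → C n m t = stirlingSecond m t := by
  intro m
  induction m with
  | zero =>
    intro t _
    match t with
    | 0 =>
      rw [show stirlingSecond 0 0 = 1 from rfl]
      rw [C, Fintype.card_eq_one_iff]
      refine ⟨⟨fun i => i.elim0, canon_zero _, by simp⟩, ?_⟩
      rintro ⟨f, hf⟩
      apply Subtype.ext
      funext i
      exact i.elim0
    | t + 1 =>
      rw [show stirlingSecond 0 (t+1) = 0 from rfl]
      rw [C, Fintype.card_eq_zero_iff]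
      constructor
      rintro ⟨f, -, hcard⟩
      have : (Finset.univ.image f) = (∅ : Finset (Fin n)) := by simp
      rw [this] at hcard
      simp at hcard
  | succ m ih =>
    intro t ht
    match t with
    | 0 =>
      rw [show stirlingSecond (m+1) 0 = 0 from rfl]
      rw [C, Fintype.card_eq_zero_iff]
      constructor
      rintro ⟨f, -, hcard⟩
      have : f 0 ∈ Finset.univ.image f := Finset.mem_image.2 ⟨0, Finset.mem_univ _, rfl⟩
      have hpos : 0 < (Finset.univ.image f).card := Finset.card_pos.2 ⟨_, this⟩
      omega
    | t + 1 =>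
      have hcards := Fintype.card_of_bijective (ψ_bijective n m t ht)
      rw [Fintype.card_sum, Fintype.card_prod, Fintype.card_fin] at hcards
      have : C n (m+1) (t+1) = C n m (t+1) * (t+1) + C n m t := by
        rw [C, ← hcards]; rfl
      rw [this, ih (t+1) ht, ih t (le_of_lt ht)]
      rw [show stirlingSecond (m+1) (t+1) = (t+1) * stirlingSecond m (t+1) + stirlingSecond m t
        from rfl]
      ring

lemma card_canon_eq (n m : ℕ) (hm : 1 ≤ m) :
    Fintype.card {f : Fin m → Fin n // canon f} = ∑ t ∈ Finset.Icc 1 n, stirlingSecond m t := by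
  rw [Fintype.card_subtype]
  rw [Finset.card_eq_sum_card_fiberwise
    (f := fun f : Fin m → Fin n => (Finset.univ.image f).card) (t := Finset.Icc 1 n) ?_]
  · refine Finset.sum_congr rfl fun t ht => ?_
    rw [Finset.filter_filter]
    rw [← C_eq n m t (Finset.mem_Icc.1 ht).2, C, Fintype.card_subtype]
  · intro f hf
    rw [Finset.mem_coe, Finset.mem_Icc]
    constructor
    · have : f ⟨0, hm⟩ ∈ Finset.univ.image f := Finset.mem_image.2 ⟨_, Finset.mem_univ _, rfl⟩
      exact Finset.card_pos.2 ⟨_, this⟩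
    · have := Finset.card_le_univ (Finset.univ.image f)
      simpa using this



section LA
variable {n l k : ℕ}

lemma mul_permMat (M : Matrix (Fin l → Fin n) (Fin k → Fin n) ℝ) (g : Equiv.Perm (Fin n))
    (I : Fin l → Fin n) (J : Fin k → Fin n) :
    (M * permMat n k g) I J = M I (⇑g ∘ J) := by
  simp only [Matrix.mul_apply, permMat, Matrix.of_apply, mul_ite, mul_one, mul_zero]
  rw [Finset.sum_ite_eq' Finset.univ (⇑g ∘ J) (M I)]
  simp

lemma permMat_mul (M : Matrix (Fin l → Fin n) (Fin k → Fin n) ℝ) (g : Equiv.Perm (Fin n))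
    (I : Fin l → Fin n) (J : Fin k → Fin n) :
    (permMat n l g * M) I J = M (⇑g⁻¹ ∘ I) J := by
  simp only [Matrix.mul_apply, permMat, Matrix.of_apply, ite_mul, one_mul, zero_mul]
  have hiff : ∀ I' : Fin l → Fin n, (I = ⇑g ∘ I') ↔ (I' = ⇑g⁻¹ ∘ I) := by
    intro I'
    constructor
    · rintro rfl; funext i; simp
    · rintro rfl; funext i; simp
  simp_rw [hiff]
  rw [Finset.sum_ite_eq' Finset.univ (⇑g⁻¹ ∘ I) (fun I' => M I' J)]
  simp

lemma mem_equivariant_iff (M : Matrix (Fin l → Fin n) (Fin k → Fin n) ℝ) :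
    M ∈ equivariantSubmodule n l k ↔
      ∀ (g : Equiv.Perm (Fin n)) (I : Fin l → Fin n) (J : Fin k → Fin n),
        M (⇑g ∘ I) (⇑g ∘ J) = M I J := by
  constructor
  · intro hM g I J
    have h := congrFun (congrFun (hM g) (⇑g ∘ I)) J
    rw [mul_permMat, permMat_mul] at h
    have : ⇑g⁻¹ ∘ (⇑g ∘ I) = I := by funext i; simp
    rwa [this] at h
  · intro hM g
    ext I J
    rw [mul_permMat, permMat_mul]
    have h := hM g (⇑g⁻¹ ∘ I) J
    have : ⇑g ∘ (⇑g⁻¹ ∘ I) = I := by funext i; simp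
    rwa [this] at h

/-- The orbit setoid on tuples. -/
def orbSetoid (m n : ℕ) : Setoid (Fin m → Fin n) where
  r f f' := ∃ g : Equiv.Perm (Fin n), f' = ⇑g ∘ f
  iseqv := by
    constructor
    · intro f; exact ⟨1, by funext i; simp⟩
    · rintro f f' ⟨g, rfl⟩; exact ⟨g⁻¹, by funext i; simp⟩
    · rintro f f' f'' ⟨g, rfl⟩ ⟨g', rfl⟩
      exact ⟨g' * g, by funext i; simp⟩

def joinT (I : Fin l → Fin n) (J : Fin k → Fin n) : Fin (l + k) → Fin n :=
  fun i => Sum.elim I J (finSumFinEquiv.symm i)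

def fstT (h : Fin (l + k) → Fin n) : Fin l → Fin n := fun i => h (finSumFinEquiv (Sum.inl i))
def sndT (h : Fin (l + k) → Fin n) : Fin k → Fin n := fun j => h (finSumFinEquiv (Sum.inr j))

lemma joinT_comp (g : Equiv.Perm (Fin n)) (I : Fin l → Fin n) (J : Fin k → Fin n) :
    joinT (⇑g ∘ I) (⇑g ∘ J) = ⇑g ∘ joinT I J := by
  funext i
  show Sum.elim (⇑g ∘ I) (⇑g ∘ J) (finSumFinEquiv.symm i)
      = g (Sum.elim I J (finSumFinEquiv.symm i))
  generalize finSumFinEquiv.symm i = s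
  cases s <;> rfl

lemma fstT_joinT (I : Fin l → Fin n) (J : Fin k → Fin n) : fstT (joinT I J) = I := by
  funext i; unfold fstT joinT; rw [Equiv.symm_apply_apply]; rfl

lemma sndT_joinT (I : Fin l → Fin n) (J : Fin k → Fin n) : sndT (joinT I J) = J := by
  funext i; unfold sndT joinT; rw [Equiv.symm_apply_apply]; rfl

lemma joinT_fst_snd (h : Fin (l + k) → Fin n) : joinT (fstT h) (sndT h) = h := by
  funext i
  show Sum.elim (fstT h) (sndT h) (finSumFinEquiv.symm i) = h i
  conv_rhs => rw [← Equiv.apply_symm_apply finSumFinEquiv i]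
  generalize finSumFinEquiv.symm i = s
  cases s <;> rfl

/-- The linear equivalence between functions on the orbit space and the
equivariant submodule. -/
noncomputable def equivariantEquiv (n l k : ℕ) :
    (Quotient (orbSetoid (l + k) n) → ℝ) ≃ₗ[ℝ] equivariantSubmodule n l k where
  toFun f := ⟨Matrix.of fun I J => f ⟦joinT I J⟧, by
    rw [mem_equivariant_iff]
    intro g I J
    show f ⟦joinT (⇑g ∘ I) (⇑g ∘ J)⟧ = f ⟦joinT I J⟧
    rw [joinT_comp]
    congr 1
    exact Quotient.sound ⟨g⁻¹, by funext i; simp⟩⟩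
  map_add' f f' := rfl
  map_smul' c f := rfl
  invFun M q := Quotient.liftOn q (fun h => M.1 (fstT h) (sndT h)) (by
    rintro h h' ⟨g, rfl⟩
    show M.1 (fstT h) (sndT h) = M.1 (⇑g ∘ fstT h) (⇑g ∘ sndT h)
    exact ((mem_equivariant_iff M.1).1 M.2 g (fstT h) (sndT h)).symm)
  left_inv f := by
    funext q
    refine Quotient.inductionOn q fun h => ?_
    show f ⟦joinT (fstT h) (sndT h)⟧ = f ⟦h⟧
    rw [joinT_fst_snd]
  right_inv M := by
    apply Subtype.ext
    ext I J
    show M.1 (fstT (joinT I J)) (sndT (joinT I J)) = M.1 I J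
    rw [fstT_joinT, sndT_joinT]

/-- Orbits correspond to canonical representatives. -/
noncomputable def quotEquivCanon (m n : ℕ) :
    {f : Fin m → Fin n // canon f} ≃ Quotient (orbSetoid m n) := by
  refine Equiv.ofBijective (fun f => ⟦f.1⟧) ⟨?_, ?_⟩
  · rintro ⟨f, hf⟩ ⟨f', hf'⟩ hff
    have := Quotient.exact hff
    exact Subtype.ext (canon_unique hf hf' this).symm
  · intro q
    refine Quotient.inductionOn q fun h => ?_
    obtain ⟨g, hg⟩ := canon_exists h
    exact ⟨⟨⇑g ∘ h, hg⟩, Quotient.sound ((orbSetoid m n).iseqv.symm ⟨g, rfl⟩)⟩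

/-- The dimension of the space of `Sₙ`-equivariant linear maps from `(ℝⁿ)^{⊗k}` to
`(ℝⁿ)^{⊗l}` equals `∑_{t=1}^{n} S(l+k, t)`, the number of set partitions of `[l+k]`
into at most `n` blocks, for `l + k ≥ 1`. -/
theorem finrank_equivariant (n l k : ℕ) (h : 1 ≤ l + k) :
    Module.finrank ℝ (equivariantSubmodule n l k) =
      ∑ t ∈ Finset.Icc 1 n, stirlingSecond (l + k) t := by
  rw [← (equivariantEquiv n l k).finrank_eq]
  rw [Module.finrank_fintype_fun_eq_card]
  rw [← Fintype.card_congr (quotEquivCanon (l + k) n)]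
  exact card_canon_eq n (l + k) h


end LA
end Count
end

section
/- In the partition category, composition of partition diagrams is associative: for composable diagrams, (d₃ • d₂) • d₁ = d₃ • (d₂ • d₁), where • includes the factor n^{c} counting removed middle-row connected components. -/
open scoped Classical

/-- The relation generating the concatenation of an `(l,m)`-partition diagram `d₂`
(top `m`, bottom `l`) on top of a `(k,l)`-partition diagram `d₁` (top `l`, bottom `k`):
the middle row of `l` vertices is shared. -/
def concatRel (m l k : ℕ) (d₂ : Setoid (Fin m ⊕ Fin l)) (d₁ : Setoid (Fin l ⊕ Fin k)) :
    (Fin m ⊕ (Fin l ⊕ Fin k)) → (Fin m ⊕ (Fin l ⊕ Fin k)) → Prop := fun x y =>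
  (∃ a b, d₂.r a b ∧ x = Sum.map id Sum.inl a ∧ y = Sum.map id Sum.inl b) ∨
  (∃ a b, d₁.r a b ∧ x = Sum.inr a ∧ y = Sum.inr b)

/-- The equivalence relation on the three rows generated by stacking `d₂` on top of `d₁`. -/
def concatSetoid (m l k : ℕ) (d₂ : Setoid (Fin m ⊕ Fin l)) (d₁ : Setoid (Fin l ⊕ Fin k)) :
    Setoid (Fin m ⊕ (Fin l ⊕ Fin k)) :=
  Relation.EqvGen.setoid (concatRel m l k d₂ d₁)

/-- The composed `(k,m)`-partition diagram: restrict the stacked equivalence relation to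
the outer (top and bottom) rows. -/
def compDiagram (m l k : ℕ) (d₂ : Setoid (Fin m ⊕ Fin l)) (d₁ : Setoid (Fin l ⊕ Fin k)) :
    Setoid (Fin m ⊕ Fin k) :=
  Setoid.comap (Sum.map id Sum.inr) (concatSetoid m l k d₂ d₁)

/-- The number of connected components of the concatenated diagram lying entirely in the
middle row; these are removed during composition. -/
noncomputable def removedCount (m l k : ℕ) (d₂ : Setoid (Fin m ⊕ Fin l))
    (d₁ : Setoid (Fin l ⊕ Fin k)) : ℕ :=
  Nat.card {q : Quotient (concatSetoid m l k d₂ d₁) //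
    ∀ x, Quotient.mk (concatSetoid m l k d₂ d₁) x = q → ∃ y : Fin l, x = Sum.inr (Sum.inl y)}

/-- The bilinear composition `•` on the linear spans of partition diagrams:
`d₂ • d₁ = n^{c(d₂,d₁)} (d₂ ∘ d₁)`, extended bilinearly. -/
noncomputable def bullet (n m l k : ℕ) (x : Setoid (Fin m ⊕ Fin l) →₀ ℝ)
    (y : Setoid (Fin l ⊕ Fin k) →₀ ℝ) : Setoid (Fin m ⊕ Fin k) →₀ ℝ :=
  x.sum fun d₂ a => y.sum fun d₁ b =>
    Finsupp.single (compDiagram m l k d₂ d₁) (a * b * (n : ℝ) ^ removedCount m l k d₂ d₁)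

open Relation

section Bridge
variable {α γ : Type*} (ι : α → γ) (R : γ → γ → Prop) (s : α → α → Prop)

/-- The combined relation on `γ`. -/
def bigRel : γ → γ → Prop := fun u v => R u v ∨ ∃ a b, s a b ∧ u = ι a ∧ v = ι b

/-- The restricted generated relation on `α`. -/
def resRel : α → α → Prop := fun x y => R (ι x) (ι y) ∨ s x y

def EG : α → α → Prop := EqvGen (resRel ι R s)

def Link (w : γ) (x : α) : Prop :=
  (∃ y, w = ι y ∧ EG ι R s y x) ∨ (∃ z, R w (ι z) ∧ EG ι R s z x)

def Bdg (u v : γ) : Prop :=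
  (∀ x, Link ι R s u x ↔ Link ι R s v x) ∧
  ((¬∃ a, u = ι a) → (¬∃ a, v = ι a) →
    (R u v ∨ u = v ∨ ∃ z w, R u (ι z) ∧ EG ι R s z w ∧ R (ι w) v))

variable (hι : Function.Injective ι)
  (hsymm : ∀ u v, R u v → R v u) (htrans : ∀ u v w, R u v → R v w → R u w)

include hι hsymm htrans

theorem bdg_of_eqvGen : ∀ u v, EqvGen (bigRel ι R s) u v → Bdg ι R s u v := by
  intro u v h
  induction h with
  | rel u v huv =>
    rcases huv with hR | ⟨a, b, hs, rfl, rfl⟩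
    · constructor
      · intro x
        constructor
        · rintro (⟨y, rfl, hE⟩ | ⟨z, hz, hE⟩)
          · exact Or.inr ⟨y, hsymm _ _ hR, hE⟩
          · exact Or.inr ⟨z, htrans _ _ _ (hsymm _ _ hR) hz, hE⟩
        · rintro (⟨y, rfl, hE⟩ | ⟨z, hz, hE⟩)
          · exact Or.inr ⟨y, hR, hE⟩
          · exact Or.inr ⟨z, htrans _ _ _ hR hz, hE⟩
      · intro _ _; exact Or.inl hR
    · constructor
      · have hab : EG ι R s a b := EqvGen.rel _ _ (Or.inr hs)
        intro x
        constructor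
        · rintro (⟨y, hy, hE⟩ | ⟨z, hz, hE⟩)
          · exact Or.inl ⟨b, rfl, (hab.symm _ _).trans _ _ _ ((hι hy) ▸ hE)⟩
          · exact Or.inl ⟨b, rfl, ((hab.symm _ _).trans _ _ _
              (EqvGen.rel _ _ (Or.inl hz))).trans _ _ _ hE⟩
        · rintro (⟨y, hy, hE⟩ | ⟨z, hz, hE⟩)
          · exact Or.inl ⟨a, rfl, hab.trans _ _ _ ((hι hy) ▸ hE)⟩
          · exact Or.inl ⟨a, rfl, (hab.trans _ _ _
              (EqvGen.rel _ _ (Or.inl hz))).trans _ _ _ hE⟩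
      · intro hu _; exact absurd ⟨a, rfl⟩ hu
  | refl u => exact ⟨fun _ => Iff.rfl, fun _ _ => Or.inr (Or.inl rfl)⟩
  | symm u v _ ih =>
    refine ⟨fun x => (ih.1 x).symm, fun hv hu => ?_⟩
    rcases ih.2 hu hv with hR | rfl | ⟨z, w, h1, h2, h3⟩
    · exact Or.inl (hsymm _ _ hR)
    · exact Or.inr (Or.inl rfl)
    · exact Or.inr (Or.inr ⟨w, z, hsymm _ _ h3, h2.symm _ _, hsymm _ _ h1⟩)
  | trans u v w _ _ ih1 ih2 =>
    refine ⟨fun x => (ih1.1 x).trans (ih2.1 x), fun hu hw => ?_⟩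
    by_cases hv : ∃ c, v = ι c
    · obtain ⟨c, rfl⟩ := hv
      have l1 : Link ι R s u c := (ih1.1 c).mpr (Or.inl ⟨c, rfl, EqvGen.refl c⟩)
      have l2 : Link ι R s w c := (ih2.1 c).mp (Or.inl ⟨c, rfl, EqvGen.refl c⟩)
      rcases l1 with ⟨y, rfl, _⟩ | ⟨z, hz, hE⟩
      · exact absurd ⟨y, rfl⟩ hu
      rcases l2 with ⟨y, rfl, _⟩ | ⟨z', hz', hE'⟩
      · exact absurd ⟨y, rfl⟩ hw
      exact Or.inr (Or.inr ⟨z, z', hz, hE.trans _ _ _ ((hE'.symm _ _)), hsymm _ _ hz'⟩)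
    · rcases ih1.2 hu hv with h1 | rfl | ⟨z, w', ha, hb, hc⟩
      · rcases ih2.2 hv hw with h2 | rfl | ⟨z, w', ha, hb, hc⟩
        · exact Or.inl (htrans _ _ _ h1 h2)
        · exact Or.inl h1
        · exact Or.inr (Or.inr ⟨z, w', htrans _ _ _ h1 ha, hb, hc⟩)
      · exact ih2.2 hv hw
      · rcases ih2.2 hv hw with h2 | rfl | ⟨z', w'', ha', hb', hc'⟩
        · exact Or.inr (Or.inr ⟨z, w', ha, hb, htrans _ _ _ hc h2⟩)
        · exact Or.inr (Or.inr ⟨z, w', ha, hb, hc⟩)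
        · refine Or.inr (Or.inr ⟨z, w'', ha, ?_, hc'⟩)
          have : EG ι R s w' z' := EqvGen.rel _ _ (Or.inl (htrans _ _ _ hc ha'))
          exact (hb.trans _ _ _ this).trans _ _ _ hb'

/-- Restriction of the big equivalence relation to the range of `ι`. -/
theorem eqvGen_iota_iff (x y : α) :
    EqvGen (bigRel ι R s) (ι x) (ι y) ↔ EG ι R s x y := by
  constructor
  · intro h
    have hb := bdg_of_eqvGen ι R s hι hsymm htrans _ _ h
    have : Link ι R s (ι y) x := (hb.1 x).mp (Or.inl ⟨x, rfl, EqvGen.refl x⟩)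
    rcases this with ⟨y', hy', hE⟩ | ⟨z, hz, hE⟩
    · exact ((hι hy') ▸ hE).symm _ _
    · exact ((EqvGen.rel _ _ (Or.inl hz) : EG ι R s y z).trans _ _ _ hE).symm _ _
  · intro h
    induction h with
    | rel a b hab =>
      rcases hab with h | h
      · exact EqvGen.rel _ _ (Or.inl h)
      · exact EqvGen.rel _ _ (Or.inr ⟨a, b, h, rfl, rfl⟩)
    | refl a => exact EqvGen.refl _
    | symm a b _ ih => exact ih.symm _ _
    | trans a b c _ _ ih1 ih2 => exact ih1.trans _ _ _ ih2

/-- Purity transfer: outside the range, with no connection to the range. -/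
theorem eqvGen_pure (u v : γ) (h : EqvGen (bigRel ι R s) u v)
    (hu : ¬∃ a, u = ι a) (hpure : ∀ z, ¬ R u (ι z)) : R u v ∨ u = v := by
  have hb := bdg_of_eqvGen ι R s hι hsymm htrans _ _ h
  by_cases hv : ∃ a, v = ι a
  · obtain ⟨c, rfl⟩ := hv
    have : Link ι R s u c := (hb.1 c).mpr (Or.inl ⟨c, rfl, EqvGen.refl c⟩)
    rcases this with ⟨y, rfl, _⟩ | ⟨z, hz, _⟩
    · exact absurd ⟨y, rfl⟩ hu
    · exact absurd hz (hpure z)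
  · rcases hb.2 hu hv with h | h | ⟨z, _, hz, _, _⟩
    · exact Or.inl h
    · exact Or.inr h
    · exact absurd hz (hpure z)

end Bridge


section Concrete

variable (p m l k : ℕ) (d₃ : Setoid (Fin p ⊕ Fin m)) (d₂ : Setoid (Fin m ⊕ Fin l))
  (d₁ : Setoid (Fin l ⊕ Fin k))

abbrev Big := Fin p ⊕ (Fin m ⊕ (Fin l ⊕ Fin k))

def e3 : Fin p ⊕ Fin m → Big p m l k := Sum.map id Sum.inl
def e2 : Fin m ⊕ Fin l → Big p m l k := fun a => Sum.inr (Sum.map id Sum.inl a)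
def e1 : Fin l ⊕ Fin k → Big p m l k := fun a => Sum.inr (Sum.inr a)
def jL : (Fin p ⊕ (Fin m ⊕ Fin l)) → Big p m l k := Sum.map id (Sum.map id Sum.inl)
def jM : (Fin m ⊕ (Fin l ⊕ Fin k)) → Big p m l k := Sum.inr
def iL : (Fin p ⊕ (Fin l ⊕ Fin k)) → Big p m l k := Sum.map id Sum.inr
def iM : (Fin p ⊕ (Fin m ⊕ Fin k)) → Big p m l k := Sum.map id (Sum.map id Sum.inr)

lemma jL_inj : Function.Injective (jL p m l k) := by
  rintro (a | b | c) (a' | b' | c') h <;> simp_all [jL]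

lemma jM_inj : Function.Injective (jM p m l k) := by
  intro a b h; simpa [jM] using h

lemma iL_inj : Function.Injective (iL p m l k) := by
  rintro (a | b) (a' | b') h <;> simp_all [iL]

lemma iM_inj : Function.Injective (iM p m l k) := by
  rintro (a | b | c) (a' | b' | c') h <;> simp_all [iM]

def tripleRel : Big p m l k → Big p m l k → Prop := fun u v =>
  (∃ a b, d₃.r a b ∧ u = e3 p m l k a ∧ v = e3 p m l k b) ∨
  (∃ a b, d₂.r a b ∧ u = e2 p m l k a ∧ v = e2 p m l k b) ∨
  (∃ a b, d₁.r a b ∧ u = e1 p m l k a ∧ v = e1 p m l k b)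

def RL : Big p m l k → Big p m l k → Prop := fun u v =>
  ∃ a b, (concatSetoid p m l d₃ d₂).r a b ∧ u = jL p m l k a ∧ v = jL p m l k b

def sL : (Fin p ⊕ (Fin l ⊕ Fin k)) → (Fin p ⊕ (Fin l ⊕ Fin k)) → Prop := fun x y =>
  ∃ a b, d₁.r a b ∧ x = Sum.inr a ∧ y = Sum.inr b

def RM : Big p m l k → Big p m l k → Prop := fun u v =>
  ∃ a b, (concatSetoid m l k d₂ d₁).r a b ∧ u = jM p m l k a ∧ v = jM p m l k b

def sM : (Fin p ⊕ (Fin m ⊕ Fin k)) → (Fin p ⊕ (Fin m ⊕ Fin k)) → Prop := fun x y =>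
  ∃ a b, d₃.r a b ∧ x = Sum.map id Sum.inl a ∧ y = Sum.map id Sum.inl b

lemma RL_symm : ∀ u v, RL p m l k d₃ d₂ u v → RL p m l k d₃ d₂ v u := by
  rintro u v ⟨a, b, h, rfl, rfl⟩; exact ⟨b, a, (concatSetoid p m l d₃ d₂).symm h, rfl, rfl⟩

lemma RL_trans : ∀ u v w, RL p m l k d₃ d₂ u v → RL p m l k d₃ d₂ v w →
    RL p m l k d₃ d₂ u w := by
  rintro u v w ⟨a, b, h, rfl, rfl⟩ ⟨a', b', h', hv, rfl⟩
  exact ⟨a, b', (concatSetoid p m l d₃ d₂).trans h (jL_inj p m l k hv ▸ h'), rfl, rfl⟩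

lemma RM_symm : ∀ u v, RM p m l k d₂ d₁ u v → RM p m l k d₂ d₁ v u := by
  rintro u v ⟨a, b, h, rfl, rfl⟩; exact ⟨b, a, (concatSetoid m l k d₂ d₁).symm h, rfl, rfl⟩

lemma RM_trans : ∀ u v w, RM p m l k d₂ d₁ u v → RM p m l k d₂ d₁ v w →
    RM p m l k d₂ d₁ u w := by
  rintro u v w ⟨a, b, h, rfl, rfl⟩ ⟨a', b', h', hv, rfl⟩
  exact ⟨a, b', (concatSetoid m l k d₂ d₁).trans h (jM_inj p m l k hv ▸ h'), rfl, rfl⟩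

/-- transport of the upper concatenation into the triple. -/
lemma transportL : ∀ a b, (concatSetoid p m l d₃ d₂).r a b →
    Relation.EqvGen (tripleRel p m l k d₃ d₂ d₁) (jL p m l k a) (jL p m l k b) := by
  intro a b h
  induction h with
  | rel a b hab =>
    rcases hab with ⟨a', b', h', rfl, rfl⟩ | ⟨a', b', h', rfl, rfl⟩
    · refine Relation.EqvGen.rel _ _ (Or.inl ⟨a', b', h', ?_, ?_⟩) <;>
        rcases a' with a' | a' <;> rcases b' with b' | b' <;> rfl
    · exact Relation.EqvGen.rel _ _ (Or.inr (Or.inl ⟨a', b', h', rfl, rfl⟩))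
  | refl a => exact Relation.EqvGen.refl _
  | symm a b _ ih => exact ih.symm _ _
  | trans a b c _ _ ih1 ih2 => exact ih1.trans _ _ _ ih2

/-- transport of the lower concatenation into the triple. -/
lemma transportM : ∀ a b, (concatSetoid m l k d₂ d₁).r a b →
    Relation.EqvGen (tripleRel p m l k d₃ d₂ d₁) (jM p m l k a) (jM p m l k b) := by
  intro a b h
  induction h with
  | rel a b hab =>
    rcases hab with ⟨a', b', h', rfl, rfl⟩ | ⟨a', b', h', rfl, rfl⟩
    · refine Relation.EqvGen.rel _ _ (Or.inr (Or.inl ⟨a', b', h', ?_, ?_⟩)) <;> rfl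
    · exact Relation.EqvGen.rel _ _ (Or.inr (Or.inr ⟨a', b', h', rfl, rfl⟩))
  | refl a => exact Relation.EqvGen.refl _
  | symm a b _ ih => exact ih.symm _ _
  | trans a b c _ _ ih1 ih2 => exact ih1.trans _ _ _ ih2

/-- The two presentations of the triple relation generate the same equivalence. -/
lemma TL_eq : ∀ u v, Relation.EqvGen (bigRel (iL p m l k) (RL p m l k d₃ d₂) (sL p l k d₁)) u v ↔
    Relation.EqvGen (tripleRel p m l k d₃ d₂ d₁) u v := by
  intro u v
  constructor
  · intro h
    induction h with
    | rel u v huv =>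
      rcases huv with ⟨a, b, h, rfl, rfl⟩ | ⟨a, b, ⟨a', b', h', rfl, rfl⟩, rfl, rfl⟩
      · exact transportL p m l k d₃ d₂ d₁ a b h
      · exact Relation.EqvGen.rel _ _ (Or.inr (Or.inr ⟨a', b', h', rfl, rfl⟩))
    | refl u => exact Relation.EqvGen.refl _
    | symm u v _ ih => exact ih.symm _ _
    | trans u v w _ _ ih1 ih2 => exact ih1.trans _ _ _ ih2
  · intro h
    refine Relation.EqvGen.mono (?_ : ∀ a b, _ → _) u v h
    rintro u v (⟨a, b, h, rfl, rfl⟩ | ⟨a, b, h, rfl, rfl⟩ | ⟨a, b, h, rfl, rfl⟩)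
    · refine Or.inl ⟨Sum.map id Sum.inl a, Sum.map id Sum.inl b,
        Relation.EqvGen.rel _ _ (Or.inl ⟨a, b, h, rfl, rfl⟩), ?_, ?_⟩ <;>
        rcases a with a | a <;> rcases b with b | b <;> rfl
    · refine Or.inl ⟨Sum.inr a, Sum.inr b,
        Relation.EqvGen.rel _ _ (Or.inr ⟨a, b, h, rfl, rfl⟩), ?_, ?_⟩ <;>
        rcases a with a | a <;> rcases b with b | b <;> rfl
    · exact Or.inr ⟨Sum.inr a, Sum.inr b, ⟨a, b, h, rfl, rfl⟩, rfl, rfl⟩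

lemma TM_eq : ∀ u v, Relation.EqvGen (bigRel (iM p m l k) (RM p m l k d₂ d₁) (sM p m k d₃)) u v ↔
    Relation.EqvGen (tripleRel p m l k d₃ d₂ d₁) u v := by
  intro u v
  constructor
  · intro h
    induction h with
    | rel u v huv =>
      rcases huv with ⟨a, b, h, rfl, rfl⟩ | ⟨a, b, ⟨a', b', h', rfl, rfl⟩, rfl, rfl⟩
      · exact transportM p m l k d₃ d₂ d₁ a b h
      · refine Relation.EqvGen.rel _ _ (Or.inl ⟨a', b', h', ?_, ?_⟩) <;>
          rcases a' with a' | a' <;> rcases b' with b' | b' <;> rfl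
    | refl u => exact Relation.EqvGen.refl _
    | symm u v _ ih => exact ih.symm _ _
    | trans u v w _ _ ih1 ih2 => exact ih1.trans _ _ _ ih2
  · intro h
    refine Relation.EqvGen.mono (?_ : ∀ a b, _ → _) u v h
    rintro u v (⟨a, b, h, rfl, rfl⟩ | ⟨a, b, h, rfl, rfl⟩ | ⟨a, b, h, rfl, rfl⟩)
    · refine Or.inr ⟨Sum.map id Sum.inl a, Sum.map id Sum.inl b, ⟨a, b, h, rfl, rfl⟩, ?_, ?_⟩ <;>
        rcases a with a | a <;> rcases b with b | b <;> rfl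
    · refine Or.inl ⟨Sum.map id Sum.inl a, Sum.map id Sum.inl b,
        Relation.EqvGen.rel _ _ (Or.inl ⟨a, b, h, rfl, rfl⟩), ?_, ?_⟩ <;>
        rcases a with a | a <;> rcases b with b | b <;> rfl
    · refine Or.inl ⟨Sum.inr a, Sum.inr b,
        Relation.EqvGen.rel _ _ (Or.inr ⟨a, b, h, rfl, rfl⟩), ?_, ?_⟩ <;>
        rcases a with a | a <;> rcases b with b | b <;> rfl


lemma iL_eq_jL (x : Fin p ⊕ (Fin l ⊕ Fin k)) (a : Fin p ⊕ (Fin m ⊕ Fin l)) :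
    iL p m l k x = jL p m l k a ↔
    ∃ c : Fin p ⊕ Fin l, x = Sum.map id Sum.inl c ∧ a = Sum.map id Sum.inr c := by
  constructor
  · rcases x with x | x | x <;> rcases a with a | a | a <;> intro h <;>
      simp_all [iL, jL]
  · rintro ⟨c, rfl, rfl⟩
    rcases c with c | c <;> rfl

lemma iM_eq_jM (x : Fin p ⊕ (Fin m ⊕ Fin k)) (a : Fin m ⊕ (Fin l ⊕ Fin k)) :
    iM p m l k x = jM p m l k a ↔
    ∃ c : Fin m ⊕ Fin k, x = Sum.inr c ∧ a = Sum.map id Sum.inr c := by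
  constructor
  · rcases x with x | x | x <;> rcases a with a | a | a <;> intro h <;>
      simp_all [iM, jM]
  · rintro ⟨c, rfl, rfl⟩
    rcases c with c | c <;> rfl

lemma resRelL_iff (x y : Fin p ⊕ (Fin l ⊕ Fin k)) :
    resRel (iL p m l k) (RL p m l k d₃ d₂) (sL p l k d₁) x y ↔
    concatRel p l k (compDiagram p m l d₃ d₂) d₁ x y := by
  constructor
  · rintro (⟨a, b, h, ha, hb⟩ | h)
    · rw [iL_eq_jL] at ha hb
      obtain ⟨c, rfl, rfl⟩ := ha
      obtain ⟨c', rfl, rfl⟩ := hb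
      exact Or.inl ⟨c, c', h, rfl, rfl⟩
    · exact Or.inr h
  · rintro (⟨a, b, h, rfl, rfl⟩ | h)
    · refine Or.inl ⟨Sum.map id Sum.inr a, Sum.map id Sum.inr b, h, ?_, ?_⟩ <;>
        rw [iL_eq_jL] <;> exact ⟨_, rfl, rfl⟩
    · exact Or.inr h

lemma resRelM_iff (x y : Fin p ⊕ (Fin m ⊕ Fin k)) :
    resRel (iM p m l k) (RM p m l k d₂ d₁) (sM p m k d₃) x y ↔
    concatRel p m k d₃ (compDiagram m l k d₂ d₁) x y := by
  constructor
  · rintro (⟨a, b, h, ha, hb⟩ | h)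
    · rw [iM_eq_jM] at ha hb
      obtain ⟨c, rfl, rfl⟩ := ha
      obtain ⟨c', rfl, rfl⟩ := hb
      exact Or.inr ⟨c, c', h, rfl, rfl⟩
    · exact Or.inl h
  · rintro (⟨a, b, h, rfl, rfl⟩ | ⟨a, b, h, rfl, rfl⟩)
    · exact Or.inr ⟨a, b, h, rfl, rfl⟩
    · refine Or.inl ⟨Sum.map id Sum.inr a, Sum.map id Sum.inr b, h, ?_, ?_⟩ <;>
        rw [iM_eq_jM] <;> exact ⟨_, rfl, rfl⟩

lemma claimA (x y : Fin p ⊕ (Fin l ⊕ Fin k)) :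
    (concatSetoid p l k (compDiagram p m l d₃ d₂) d₁).r x y ↔
    Relation.EqvGen (tripleRel p m l k d₃ d₂ d₁) (iL p m l k x) (iL p m l k y) := by
  have h1 : (concatSetoid p l k (compDiagram p m l d₃ d₂) d₁).r x y ↔
      EG (iL p m l k) (RL p m l k d₃ d₂) (sL p l k d₁) x y := by
    constructor
    · exact Relation.EqvGen.mono (fun a b h => (resRelL_iff p m l k d₃ d₂ d₁ a b).mpr h) x y
    · exact Relation.EqvGen.mono (fun a b h => (resRelL_iff p m l k d₃ d₂ d₁ a b).mp h) x y
  rw [h1, ← eqvGen_iota_iff (iL p m l k) (RL p m l k d₃ d₂) (sL p l k d₁) (iL_inj p m l k)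
    (RL_symm p m l k d₃ d₂) (RL_trans p m l k d₃ d₂), TL_eq]

lemma claimB (x y : Fin p ⊕ (Fin m ⊕ Fin k)) :
    (concatSetoid p m k d₃ (compDiagram m l k d₂ d₁)).r x y ↔
    Relation.EqvGen (tripleRel p m l k d₃ d₂ d₁) (iM p m l k x) (iM p m l k y) := by
  have h1 : (concatSetoid p m k d₃ (compDiagram m l k d₂ d₁)).r x y ↔
      EG (iM p m l k) (RM p m l k d₂ d₁) (sM p m k d₃) x y := by
    constructor
    · exact Relation.EqvGen.mono (fun a b h => (resRelM_iff p m l k d₃ d₂ d₁ a b).mpr h) x y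
    · exact Relation.EqvGen.mono (fun a b h => (resRelM_iff p m l k d₃ d₂ d₁ a b).mp h) x y
  rw [h1, ← eqvGen_iota_iff (iM p m l k) (RM p m l k d₂ d₁) (sM p m k d₃) (iM_inj p m l k)
    (RM_symm p m l k d₂ d₁) (RM_trans p m l k d₂ d₁), TM_eq]

lemma compDiagram_assoc :
    compDiagram p l k (compDiagram p m l d₃ d₂) d₁ =
    compDiagram p m k d₃ (compDiagram m l k d₂ d₁) := by
  apply Setoid.ext
  intro x y
  show (concatSetoid p l k (compDiagram p m l d₃ d₂) d₁).r _ _ ↔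
    (concatSetoid p m k d₃ (compDiagram m l k d₂ d₁)).r _ _
  rw [claimA, claimB]
  have h : ∀ z : Fin p ⊕ Fin k, iL p m l k (Sum.map id Sum.inr z) =
      iM p m l k (Sum.map id Sum.inr z) := by rintro (z | z) <;> rfl
  rw [h, h]


def TS : Setoid (Big p m l k) := Relation.EqvGen.setoid (tripleRel p m l k d₃ d₂ d₁)

def isM (u : Big p m l k) : Prop := ∃ a : Fin m, u = Sum.inr (Sum.inl a)
def isL (u : Big p m l k) : Prop := ∃ a : Fin l, u = Sum.inr (Sum.inr (Sum.inl a))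

lemma TS_r_iff (x y : Big p m l k) : (TS p m l k d₃ d₂ d₁).r x y ↔
    Relation.EqvGen (tripleRel p m l k d₃ d₂ d₁) x y := Iff.rfl

lemma TS_mk_eq (x y : Big p m l k) :
    Quotient.mk (TS p m l k d₃ d₂ d₁) x = Quotient.mk (TS p m l k d₃ d₂ d₁) y ↔
    Relation.EqvGen (tripleRel p m l k d₃ d₂ d₁) x y :=
  ⟨fun h => Quotient.exact h, fun h => Quotient.sound h⟩

lemma rangeL_or (u : Big p m l k) : (∃ x, u = iL p m l k x) ∨ isM p m l k u := by
  rcases u with u | u | u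
  · exact Or.inl ⟨Sum.inl u, rfl⟩
  · exact Or.inr ⟨u, rfl⟩
  · exact Or.inl ⟨Sum.inr u, rfl⟩

lemma rangeM_or (u : Big p m l k) : (∃ x, u = iM p m l k x) ∨ isL p m l k u := by
  rcases u with u | u | u | u
  · exact Or.inl ⟨Sum.inl u, rfl⟩
  · exact Or.inl ⟨Sum.inr (Sum.inl u), rfl⟩
  · exact Or.inr ⟨u, rfl⟩
  · exact Or.inl ⟨Sum.inr (Sum.inr u), rfl⟩

lemma iL_not_isM (x : Fin p ⊕ (Fin l ⊕ Fin k)) : ¬ isM p m l k (iL p m l k x) := by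
  rcases x with x | x <;> rintro ⟨a, h⟩ <;> simp [iL] at h

lemma iM_not_isL (x : Fin p ⊕ (Fin m ⊕ Fin k)) : ¬ isL p m l k (iM p m l k x) := by
  rcases x with x | x | x <;> rintro ⟨a, h⟩ <;> simp [iM] at h

lemma jL_isM (b : Fin p ⊕ (Fin m ⊕ Fin l)) (h : isM p m l k (jL p m l k b)) :
    ∃ y : Fin m, b = Sum.inr (Sum.inl y) := by
  rcases b with b | b | b <;> obtain ⟨a, ha⟩ := h <;> simp_all [jL]

lemma jM_isL (b : Fin m ⊕ (Fin l ⊕ Fin k)) (h : isL p m l k (jM p m l k b)) :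
    ∃ y : Fin l, b = Sum.inr (Sum.inl y) := by
  rcases b with b | b | b <;> obtain ⟨a, ha⟩ := h <;> simp_all [jM]

lemma iL_isL (b : Fin p ⊕ (Fin l ⊕ Fin k)) (h : isL p m l k (iL p m l k b)) :
    ∃ y : Fin l, b = Sum.inr (Sum.inl y) := by
  rcases b with b | b | b <;> obtain ⟨a, ha⟩ := h <;> simp_all [iL]

lemma iM_isM (b : Fin p ⊕ (Fin m ⊕ Fin k)) (h : isM p m l k (iM p m l k b)) :
    ∃ y : Fin m, b = Sum.inr (Sum.inl y) := by
  rcases b with b | b | b <;> obtain ⟨a, ha⟩ := h <;> simp_all [iM]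

/-- Purity extraction on the `jL` side. -/
lemma pure_reachL (a : Fin p ⊕ (Fin m ⊕ Fin l))
    (hM : ∀ b, (concatSetoid p m l d₃ d₂).r a b → ∃ y : Fin m, b = Sum.inr (Sum.inl y))
    (x : Big p m l k)
    (hx : Relation.EqvGen (tripleRel p m l k d₃ d₂ d₁) (jL p m l k a) x) :
    ∃ b, x = jL p m l k b ∧ (concatSetoid p m l d₃ d₂).r a b := by
  obtain ⟨y₀, rfl⟩ := hM a ((concatSetoid p m l d₃ d₂).refl a)
  have hx' := (TL_eq p m l k d₃ d₂ d₁ _ _).mpr hx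
  have hu : ¬∃ c, jL p m l k (Sum.inr (Sum.inl y₀)) = iL p m l k c := by
    rintro ⟨c, hc⟩
    exact iL_not_isM p m l k c ⟨y₀, hc.symm⟩
  have hpure : ∀ z, ¬ RL p m l k d₃ d₂ (jL p m l k (Sum.inr (Sum.inl y₀))) (iL p m l k z) := by
    rintro z ⟨a', b', hr, he, he'⟩
    obtain rfl := jL_inj p m l k he
    obtain ⟨y', hy'⟩ := hM b' hr
    rw [iL_eq_jL] at he'
    obtain ⟨c, _, hc⟩ := he'
    rw [hy'] at hc
    rcases c with c | c <;> simp [Sum.map] at hc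
  rcases eqvGen_pure (iL p m l k) (RL p m l k d₃ d₂) (sL p l k d₁) (iL_inj p m l k)
      (RL_symm p m l k d₃ d₂) (RL_trans p m l k d₃ d₂) _ _ hx' hu hpure with
    ⟨a', b', hr, he, rfl⟩ | he
  · obtain rfl := jL_inj p m l k he
    exact ⟨b', rfl, hr⟩
  · exact ⟨_, he.symm, (concatSetoid p m l d₃ d₂).refl _⟩

/-- Purity extraction on the `jM` side. -/
lemma pure_reachM (a : Fin m ⊕ (Fin l ⊕ Fin k))
    (hL : ∀ b, (concatSetoid m l k d₂ d₁).r a b → ∃ y : Fin l, b = Sum.inr (Sum.inl y))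
    (x : Big p m l k)
    (hx : Relation.EqvGen (tripleRel p m l k d₃ d₂ d₁) (jM p m l k a) x) :
    ∃ b, x = jM p m l k b ∧ (concatSetoid m l k d₂ d₁).r a b := by
  obtain ⟨y₀, rfl⟩ := hL a ((concatSetoid m l k d₂ d₁).refl a)
  have hx' := (TM_eq p m l k d₃ d₂ d₁ _ _).mpr hx
  have hu : ¬∃ c, jM p m l k (Sum.inr (Sum.inl y₀)) = iM p m l k c := by
    rintro ⟨c, hc⟩
    exact iM_not_isL p m l k c ⟨y₀, hc.symm⟩
  have hpure : ∀ z, ¬ RM p m l k d₂ d₁ (jM p m l k (Sum.inr (Sum.inl y₀))) (iM p m l k z) := by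
    rintro z ⟨a', b', hr, he, he'⟩
    obtain rfl := jM_inj p m l k he
    obtain ⟨y', hy'⟩ := hL b' hr
    rw [iM_eq_jM] at he'
    obtain ⟨c, _, hc⟩ := he'
    rw [hy'] at hc
    rcases c with c | c <;> simp [Sum.map] at hc
  rcases eqvGen_pure (iM p m l k) (RM p m l k d₂ d₁) (sM p m k d₃) (iM_inj p m l k)
      (RM_symm p m l k d₂ d₁) (RM_trans p m l k d₂ d₁) _ _ hx' hu hpure with
    ⟨a', b', hr, he, rfl⟩ | he
  · obtain rfl := jM_inj p m l k he
    exact ⟨b', rfl, hr⟩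
  · exact ⟨_, he.symm, (concatSetoid m l k d₂ d₁).refl _⟩


lemma count1 : removedCount p m l d₃ d₂ =
    Nat.card {q : Quotient (TS p m l k d₃ d₂ d₁) //
      ∀ x, Quotient.mk (TS p m l k d₃ d₂ d₁) x = q → isM p m l k x} := by
  apply Nat.card_congr
  refine Equiv.ofBijective (fun q => ⟨Quotient.map (jL p m l k)
    (fun a b h => transportL p m l k d₃ d₂ d₁ a b h) q.1, ?_⟩) ⟨?_, ?_⟩
  · obtain ⟨q, hq⟩ := q
    obtain ⟨a, rfl⟩ := Quotient.exists_rep q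
    intro x hx
    have hT : Relation.EqvGen (tripleRel p m l k d₃ d₂ d₁) (jL p m l k a) x :=
      ((TS_mk_eq p m l k d₃ d₂ d₁ x (jL p m l k a)).mp hx).symm _ _
    obtain ⟨b, rfl, hr⟩ := pure_reachL p m l k d₃ d₂ d₁ a
      (fun b hb => hq b (Quotient.sound ((concatSetoid p m l d₃ d₂).symm hb))) x hT
    obtain ⟨y, rfl⟩ := hq b (Quotient.sound ((concatSetoid p m l d₃ d₂).symm hr))
    exact ⟨y, rfl⟩
  · rintro ⟨q, hq⟩ ⟨q', hq'⟩ h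
    obtain ⟨a, rfl⟩ := Quotient.exists_rep q
    obtain ⟨a', rfl⟩ := Quotient.exists_rep q'
    simp only [Subtype.mk.injEq, Quotient.map_mk] at h
    have hT : Relation.EqvGen (tripleRel p m l k d₃ d₂ d₁) (jL p m l k a) (jL p m l k a') :=
      (TS_mk_eq p m l k d₃ d₂ d₁ _ _).mp h
    obtain ⟨b, hb, hr⟩ := pure_reachL p m l k d₃ d₂ d₁ a
      (fun b hb => hq b (Quotient.sound ((concatSetoid p m l d₃ d₂).symm hb))) _ hT
    obtain rfl := jL_inj p m l k hb
    exact Subtype.ext (Quotient.sound hr)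
  · rintro ⟨Q, hQ⟩
    obtain ⟨x, rfl⟩ := Quotient.exists_rep Q
    obtain ⟨y, rfl⟩ := hQ x rfl
    refine ⟨⟨Quotient.mk _ (Sum.inr (Sum.inl y)), ?_⟩, ?_⟩
    · intro b hb
      have hr : (concatSetoid p m l d₃ d₂).r (Sum.inr (Sum.inl y)) b :=
        (Quotient.exact hb).symm
      have hT := transportL p m l k d₃ d₂ d₁ _ _ hr
      have : Quotient.mk (TS p m l k d₃ d₂ d₁) (jL p m l k b) =
          Quotient.mk (TS p m l k d₃ d₂ d₁) (Sum.inr (Sum.inl y)) :=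
        ((TS_mk_eq p m l k d₃ d₂ d₁ _ _).mpr (hT.symm _ _))
      exact jL_isM p m l k b (hQ _ this)
    · exact Subtype.ext rfl

lemma count3 : removedCount m l k d₂ d₁ =
    Nat.card {q : Quotient (TS p m l k d₃ d₂ d₁) //
      ∀ x, Quotient.mk (TS p m l k d₃ d₂ d₁) x = q → isL p m l k x} := by
  apply Nat.card_congr
  refine Equiv.ofBijective (fun q => ⟨Quotient.map (jM p m l k)
    (fun a b h => transportM p m l k d₃ d₂ d₁ a b h) q.1, ?_⟩) ⟨?_, ?_⟩
  · obtain ⟨q, hq⟩ := q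
    obtain ⟨a, rfl⟩ := Quotient.exists_rep q
    intro x hx
    have hT : Relation.EqvGen (tripleRel p m l k d₃ d₂ d₁) (jM p m l k a) x :=
      ((TS_mk_eq p m l k d₃ d₂ d₁ x (jM p m l k a)).mp hx).symm _ _
    obtain ⟨b, rfl, hr⟩ := pure_reachM p m l k d₃ d₂ d₁ a
      (fun b hb => hq b (Quotient.sound ((concatSetoid m l k d₂ d₁).symm hb))) x hT
    obtain ⟨y, rfl⟩ := hq b (Quotient.sound ((concatSetoid m l k d₂ d₁).symm hr))
    exact ⟨y, rfl⟩
  · rintro ⟨q, hq⟩ ⟨q', hq'⟩ h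
    obtain ⟨a, rfl⟩ := Quotient.exists_rep q
    obtain ⟨a', rfl⟩ := Quotient.exists_rep q'
    simp only [Subtype.mk.injEq, Quotient.map_mk] at h
    have hT : Relation.EqvGen (tripleRel p m l k d₃ d₂ d₁) (jM p m l k a) (jM p m l k a') :=
      (TS_mk_eq p m l k d₃ d₂ d₁ _ _).mp h
    obtain ⟨b, hb, hr⟩ := pure_reachM p m l k d₃ d₂ d₁ a
      (fun b hb => hq b (Quotient.sound ((concatSetoid m l k d₂ d₁).symm hb))) _ hT
    obtain rfl := jM_inj p m l k hb
    exact Subtype.ext (Quotient.sound hr)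
  · rintro ⟨Q, hQ⟩
    obtain ⟨x, rfl⟩ := Quotient.exists_rep Q
    obtain ⟨y, rfl⟩ := hQ x rfl
    refine ⟨⟨Quotient.mk _ (Sum.inr (Sum.inl y)), ?_⟩, ?_⟩
    · intro b hb
      have hr : (concatSetoid m l k d₂ d₁).r (Sum.inr (Sum.inl y)) b :=
        (Quotient.exact hb).symm
      have hT := transportM p m l k d₃ d₂ d₁ _ _ hr
      have : Quotient.mk (TS p m l k d₃ d₂ d₁) (jM p m l k b) =
          Quotient.mk (TS p m l k d₃ d₂ d₁) (Sum.inr (Sum.inr (Sum.inl y))) :=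
        ((TS_mk_eq p m l k d₃ d₂ d₁ _ _).mpr (hT.symm _ _))
      exact jM_isL p m l k b (hQ _ this)
    · exact Subtype.ext rfl


lemma count2 : removedCount p l k (compDiagram p m l d₃ d₂) d₁ =
    Nat.card {q : Quotient (TS p m l k d₃ d₂ d₁) //
      (∀ x, Quotient.mk (TS p m l k d₃ d₂ d₁) x = q → isM p m l k x ∨ isL p m l k x) ∧
      ∃ y : Fin l, Quotient.mk (TS p m l k d₃ d₂ d₁) (Sum.inr (Sum.inr (Sum.inl y))) = q} := by
  apply Nat.card_congr
  refine Equiv.ofBijective (fun q => ⟨Quotient.map (iL p m l k)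
    (fun a b h => (claimA p m l k d₃ d₂ d₁ a b).mp h) q.1, ?_, ?_⟩) ⟨?_, ?_⟩
  · obtain ⟨q, hq⟩ := q
    obtain ⟨a, rfl⟩ := Quotient.exists_rep q
    intro x hx
    have hT : Relation.EqvGen (tripleRel p m l k d₃ d₂ d₁) x (iL p m l k a) :=
      (TS_mk_eq p m l k d₃ d₂ d₁ _ _).mp hx
    rcases rangeL_or p m l k x with ⟨c, rfl⟩ | hMx
    · have hr : (concatSetoid p l k (compDiagram p m l d₃ d₂) d₁).r c a :=
        (claimA p m l k d₃ d₂ d₁ c a).mpr hT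
      obtain ⟨y, rfl⟩ := hq c (Quotient.sound hr)
      exact Or.inr ⟨y, rfl⟩
    · exact Or.inl hMx
  · obtain ⟨q, hq⟩ := q
    obtain ⟨a, rfl⟩ := Quotient.exists_rep q
    obtain ⟨y, rfl⟩ := hq a rfl
    exact ⟨y, rfl⟩
  · rintro ⟨q, hq⟩ ⟨q', hq'⟩ h
    obtain ⟨a, rfl⟩ := Quotient.exists_rep q
    obtain ⟨a', rfl⟩ := Quotient.exists_rep q'
    simp only [Subtype.mk.injEq, Quotient.map_mk] at h
    have hT : Relation.EqvGen (tripleRel p m l k d₃ d₂ d₁) (iL p m l k a) (iL p m l k a') :=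
      (TS_mk_eq p m l k d₃ d₂ d₁ _ _).mp h
    exact Subtype.ext (Quotient.sound ((claimA p m l k d₃ d₂ d₁ a a').mpr hT))
  · rintro ⟨Q, hML, y, hy⟩
    refine ⟨⟨Quotient.mk _ (Sum.inr (Sum.inl y)), ?_⟩, ?_⟩
    · intro b hb
      have hr : (concatSetoid p l k (compDiagram p m l d₃ d₂) d₁).r
          (Sum.inr (Sum.inl y)) b := (Quotient.exact hb).symm
      have hT := (claimA p m l k d₃ d₂ d₁ _ _).mp hr
      have hmem : Quotient.mk (TS p m l k d₃ d₂ d₁) (iL p m l k b) = Q := by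
        rw [← hy]
        exact ((TS_mk_eq p m l k d₃ d₂ d₁ _ _).mpr (hT.symm _ _))
      rcases hML _ hmem with hMx | hLx
      · exact absurd hMx (iL_not_isM p m l k b)
      · exact iL_isL p m l k b hLx
    · exact Subtype.ext hy

lemma count4 : removedCount p m k d₃ (compDiagram m l k d₂ d₁) =
    Nat.card {q : Quotient (TS p m l k d₃ d₂ d₁) //
      (∀ x, Quotient.mk (TS p m l k d₃ d₂ d₁) x = q → isM p m l k x ∨ isL p m l k x) ∧
      ∃ y : Fin m, Quotient.mk (TS p m l k d₃ d₂ d₁) (Sum.inr (Sum.inl y)) = q} := by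
  apply Nat.card_congr
  refine Equiv.ofBijective (fun q => ⟨Quotient.map (iM p m l k)
    (fun a b h => (claimB p m l k d₃ d₂ d₁ a b).mp h) q.1, ?_, ?_⟩) ⟨?_, ?_⟩
  · obtain ⟨q, hq⟩ := q
    obtain ⟨a, rfl⟩ := Quotient.exists_rep q
    intro x hx
    have hT : Relation.EqvGen (tripleRel p m l k d₃ d₂ d₁) x (iM p m l k a) :=
      (TS_mk_eq p m l k d₃ d₂ d₁ _ _).mp hx
    rcases rangeM_or p m l k x with ⟨c, rfl⟩ | hLx
    · have hr : (concatSetoid p m k d₃ (compDiagram m l k d₂ d₁)).r c a :=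
        (claimB p m l k d₃ d₂ d₁ c a).mpr hT
      obtain ⟨y, rfl⟩ := hq c (Quotient.sound hr)
      exact Or.inl ⟨y, rfl⟩
    · exact Or.inr hLx
  · obtain ⟨q, hq⟩ := q
    obtain ⟨a, rfl⟩ := Quotient.exists_rep q
    obtain ⟨y, rfl⟩ := hq a rfl
    exact ⟨y, rfl⟩
  · rintro ⟨q, hq⟩ ⟨q', hq'⟩ h
    obtain ⟨a, rfl⟩ := Quotient.exists_rep q
    obtain ⟨a', rfl⟩ := Quotient.exists_rep q'
    simp only [Subtype.mk.injEq, Quotient.map_mk] at h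
    have hT : Relation.EqvGen (tripleRel p m l k d₃ d₂ d₁) (iM p m l k a) (iM p m l k a') :=
      (TS_mk_eq p m l k d₃ d₂ d₁ _ _).mp h
    exact Subtype.ext (Quotient.sound ((claimB p m l k d₃ d₂ d₁ a a').mpr hT))
  · rintro ⟨Q, hML, y, hy⟩
    refine ⟨⟨Quotient.mk _ (Sum.inr (Sum.inl y)), ?_⟩, ?_⟩
    · intro b hb
      have hr : (concatSetoid p m k d₃ (compDiagram m l k d₂ d₁)).r
          (Sum.inr (Sum.inl y)) b := (Quotient.exact hb).symm
      have hT := (claimB p m l k d₃ d₂ d₁ _ _).mp hr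
      have hmem : Quotient.mk (TS p m l k d₃ d₂ d₁) (iM p m l k b) = Q := by
        rw [← hy]
        exact ((TS_mk_eq p m l k d₃ d₂ d₁ _ _).mpr (hT.symm _ _))
      rcases hML _ hmem with hMx | hLx
      · exact iM_isM p m l k b hMx
      · exact absurd hLx (iM_not_isL p m l k b)
    · exact Subtype.ext hy


lemma card_split {α : Type*} [Finite α] (P T : α → Prop) :
    Nat.card {x // P x} = Nat.card {x // P x ∧ T x} + Nat.card {x // P x ∧ ¬ T x} := by
  classical
  have h := Nat.card_congr (Equiv.sumCompl (fun x : {x // P x} => T x.1))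
  rw [Nat.card_sum] at h
  rw [← h, Nat.card_congr (Equiv.subtypeSubtypeEquivSubtypeInter P T),
    Nat.card_congr (Equiv.subtypeSubtypeEquivSubtypeInter P (fun x => ¬ T x))]

lemma removedCount_assoc :
    removedCount p m l d₃ d₂ + removedCount p l k (compDiagram p m l d₃ d₂) d₁ =
    removedCount m l k d₂ d₁ + removedCount p m k d₃ (compDiagram m l k d₂ d₁) := by
  rw [count1 p m l k d₃ d₂ d₁, count2 p m l k d₃ d₂ d₁, count3 p m l k d₃ d₂ d₁,
    count4 p m l k d₃ d₂ d₁]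
  set Q := Quotient (TS p m l k d₃ d₂ d₁)
  set mkq := Quotient.mk (TS p m l k d₃ d₂ d₁)
  have key1 : ∀ q : Q, (∀ x, mkq x = q → isM p m l k x) ↔
      ((∀ x, mkq x = q → isM p m l k x ∨ isL p m l k x) ∧
        ¬ ∃ y : Fin l, mkq (Sum.inr (Sum.inr (Sum.inl y))) = q) := by
    intro q
    constructor
    · intro h
      refine ⟨fun x hx => Or.inl (h x hx), ?_⟩
      rintro ⟨y, hy⟩
      obtain ⟨a, ha⟩ := h _ hy
      simp at ha
    · rintro ⟨h1, h2⟩ x hx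
      rcases h1 x hx with h | ⟨a, rfl⟩
      · exact h
      · exact absurd ⟨a, hx⟩ h2
  have key2 : ∀ q : Q, (∀ x, mkq x = q → isL p m l k x) ↔
      ((∀ x, mkq x = q → isM p m l k x ∨ isL p m l k x) ∧
        ¬ ∃ y : Fin m, mkq (Sum.inr (Sum.inl y)) = q) := by
    intro q
    constructor
    · intro h
      refine ⟨fun x hx => Or.inr (h x hx), ?_⟩
      rintro ⟨y, hy⟩
      obtain ⟨a, ha⟩ := h _ hy
      simp at ha
    · rintro ⟨h1, h2⟩ x hx
      rcases h1 x hx with ⟨a, rfl⟩ | h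
      · exact absurd ⟨a, hx⟩ h2
      · exact h
  have e1 := card_split (P := fun q : Q => ∀ x, mkq x = q → isM p m l k x ∨ isL p m l k x)
    (T := fun q => ∃ y : Fin l, mkq (Sum.inr (Sum.inr (Sum.inl y))) = q)
  have e2 := card_split (P := fun q : Q => ∀ x, mkq x = q → isM p m l k x ∨ isL p m l k x)
    (T := fun q => ∃ y : Fin m, mkq (Sum.inr (Sum.inl y)) = q)
  rw [Nat.card_congr (Equiv.subtypeEquivRight key1), Nat.card_congr
    (Equiv.subtypeEquivRight key2)]
  beta_reduce at e1 e2
  rw [Nat.add_comm] at e1 e2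
  exact e1.symm.trans e2

end Concrete

section BulletAlg

variable (n m l k : ℕ)

lemma bullet_zero_left (y : Setoid (Fin l ⊕ Fin k) →₀ ℝ) : bullet n m l k 0 y = 0 := by
  simp [bullet]

lemma bullet_zero_right (x : Setoid (Fin m ⊕ Fin l) →₀ ℝ) : bullet n m l k x 0 = 0 := by
  simp [bullet]

lemma bullet_single_single (D₂ : Setoid (Fin m ⊕ Fin l)) (D₁ : Setoid (Fin l ⊕ Fin k))
    (a b : ℝ) : bullet n m l k (Finsupp.single D₂ a) (Finsupp.single D₁ b) =
    Finsupp.single (compDiagram m l k D₂ D₁) (a * b * (n : ℝ) ^ removedCount m l k D₂ D₁) := by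
  rw [bullet, Finsupp.sum_single_index (by simp), Finsupp.sum_single_index (by simp)]

lemma bullet_add_left (x x' : Setoid (Fin m ⊕ Fin l) →₀ ℝ) (y : Setoid (Fin l ⊕ Fin k) →₀ ℝ) :
    bullet n m l k (x + x') y = bullet n m l k x y + bullet n m l k x' y := by
  rw [bullet, Finsupp.sum_add_index]
  · rfl
  · intro D₂ _
    simp
  · intro D₂ _ a a'
    rw [← Finsupp.sum_add]
    congr 1
    ext D₁ b
    rw [← Finsupp.single_add]
    congr 1
    ring_nf

lemma bullet_add_right (x : Setoid (Fin m ⊕ Fin l) →₀ ℝ) (y y' : Setoid (Fin l ⊕ Fin k) →₀ ℝ) :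
    bullet n m l k x (y + y') = bullet n m l k x y + bullet n m l k x y' := by
  rw [bullet, bullet, bullet, ← Finsupp.sum_add]
  congr 1
  ext D₂ a
  rw [Finsupp.sum_add_index]
  · intro D₁ _
    simp
  · intro D₁ _ b b'
    rw [← Finsupp.single_add]
    congr 1
    ring

end BulletAlg

/-- Composition of partition diagrams in the partition category is associative:
`(d₃ • d₂) • d₁ = d₃ • (d₂ • d₁)`. -/
theorem bullet_assoc (n p m l k : ℕ)
    (d₃ : Setoid (Fin p ⊕ Fin m) →₀ ℝ) (d₂ : Setoid (Fin m ⊕ Fin l) →₀ ℝ)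
    (d₁ : Setoid (Fin l ⊕ Fin k) →₀ ℝ) :
    bullet n p l k (bullet n p m l d₃ d₂) d₁ = bullet n p m k d₃ (bullet n m l k d₂ d₁) := by
  induction d₃ using Finsupp.induction_linear with
  | zero => simp [bullet_zero_left]
  | add f g hf hg => simp [bullet_add_left, hf, hg]
  | single D₃ a =>
    induction d₂ using Finsupp.induction_linear with
    | zero => simp [bullet_zero_left, bullet_zero_right]
    | add f g hf hg => simp [bullet_add_left, bullet_add_right, hf, hg]
    | single D₂ b =>
      induction d₁ using Finsupp.induction_linear with
      | zero => simp [bullet_zero_right]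
      | add f g hf hg => simp [bullet_add_right, hf, hg]
      | single D₁ c =>
        rw [bullet_single_single, bullet_single_single, bullet_single_single,
          bullet_single_single, compDiagram_assoc p m l k D₃ D₂ D₁]
        congr 1
        have hc := removedCount_assoc p m l k D₃ D₂ D₁
        have hp : (n : ℝ) ^ removedCount p m l D₃ D₂ *
            (n : ℝ) ^ removedCount p l k (compDiagram p m l D₃ D₂) D₁ =
            (n : ℝ) ^ removedCount m l k D₂ D₁ *
            (n : ℝ) ^ removedCount p m k D₃ (compDiagram m l k D₂ D₁) := by
          rw [← pow_add, ← pow_add, hc]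
        linear_combination a * b * c * hp
end

section
/- The map Θ from the ℝ-linear span of (k,l)-partition diagrams to Hom_{Sₙ}((ℝⁿ)^{⊗k},(ℝⁿ)^{⊗l}), sending d_π to E_π, is a surjective linear map; i.e., every Sₙ-equivariant linear map between these tensor powers is a real linear combination of the matrices E_π. -/
open scoped Classical

/-- The map `Θ` sending a formal linear combination of partition diagrams to the
corresponding linear combination of the matrices `E_π`, as a linear map from the free
vector space on set partitions of `[l+k]`. -/
noncomputable def Theta (n l k : ℕ) :
    (Setoid (Fin l ⊕ Fin k) →₀ ℝ) →ₗ[ℝ] Matrix (Fin l → Fin n) (Fin k → Fin n) ℝ :=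
  Finsupp.linearCombination ℝ (Emat n l k)

noncomputable instance setoidFintype {X : Type*} [Fintype X] : Fintype (Setoid X) :=
  Fintype.ofInjective (fun s : Setoid X => s.r) (by
    intro a b h
    cases a; cases b
    cases h
    rfl)

/-- Two functions into `Fin n` with the same kernel differ by a permutation of `Fin n`. -/
lemma exists_perm_comp {X : Type*} {n : ℕ} (f g : X → Fin n)
    (h : Setoid.ker f = Setoid.ker g) : ∃ σ : Equiv.Perm (Fin n), g = σ ∘ f := by
  have key : ∀ x y : X, f x = f y ↔ g x = g y := by
    intro x y
    change (Setoid.ker f).r x y ↔ (Setoid.ker g).r x y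
    rw [h]
  let e : {y // y ∈ Set.range f} ≃ {y // y ∈ Set.range g} :=
    { toFun := fun y => ⟨g y.2.choose, Set.mem_range_self _⟩
      invFun := fun y => ⟨f y.2.choose, Set.mem_range_self _⟩
      left_inv := by
        rintro ⟨y, hy⟩
        apply Subtype.ext
        have h1 : f hy.choose = y := hy.choose_spec
        have h2 : g (Set.mem_range_self (f := g) hy.choose).choose = g hy.choose :=
          (Set.mem_range_self hy.choose).choose_spec
        simpa [h1] using (key _ _).mpr h2
      right_inv := by
        rintro ⟨y, hy⟩
        apply Subtype.ext
        have h1 : g hy.choose = y := hy.choose_spec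
        have h2 : f (Set.mem_range_self (f := f) hy.choose).choose = f hy.choose :=
          (Set.mem_range_self hy.choose).choose_spec
        simpa [h1] using (key _ _).mp h2 }
  refine ⟨e.extendSubtype, ?_⟩
  funext x
  have hx : f x ∈ Set.range f := Set.mem_range_self x
  have h1 := e.extendSubtype_apply_of_mem (f x) hx
  have h2 : f hx.choose = f x := hx.choose_spec
  have : (e ⟨f x, hx⟩ : Fin n) = g hx.choose := rfl
  simp only [Function.comp_apply, h1, this]
  exact ((key _ _).mp h2).symm

/-- `Θ` is surjective onto `Hom_{Sₙ}((ℝⁿ)^{⊗k}, (ℝⁿ)^{⊗l})`: every `Sₙ`-equivariant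
linear map between these tensor powers is a real linear combination of the matrices
`E_π`. -/
theorem Theta_surjective (n l k : ℕ) :
    ∀ M : Matrix (Fin l → Fin n) (Fin k → Fin n) ℝ,
      (∀ g : Equiv.Perm (Fin n), M * permMat n k g = permMat n l g * M) →
      ∃ c : Setoid (Fin l ⊕ Fin k) →₀ ℝ, Theta n l k c = M := by
  intro M hM
  -- entrywise equivariance
  have hcomp : ∀ (m : ℕ) (g : Equiv.Perm (Fin n)) (A B : Fin m → Fin n),
      (g ∘ A = g ∘ B) ↔ A = B := by
    intro m g A B
    constructor
    · intro h; funext i; exact g.injective (congrFun h i)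
    · intro h; rw [h]
  have hM' : ∀ (g : Equiv.Perm (Fin n)) (I : Fin l → Fin n) (J : Fin k → Fin n),
      M (g ∘ I) (g ∘ J) = M I J := by
    intro g I J
    have h1 := congrFun (congrFun (hM g) (g ∘ I)) J
    simp only [Matrix.mul_apply, permMat, Matrix.of_apply, mul_ite, mul_one, mul_zero,
      ite_mul, one_mul, zero_mul] at h1
    rw [Finset.sum_ite_eq' Finset.univ (g ∘ J) (fun x => M (g ∘ I) x)] at h1
    simp_rw [hcomp] at h1
    rw [Finset.sum_ite_eq Finset.univ I (fun x => M x J)] at h1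
    simpa using h1
  -- the "exact kernel" indicator matrices
  set F : Setoid (Fin l ⊕ Fin k) → Matrix (Fin l → Fin n) (Fin k → Fin n) ℝ :=
    fun π => Matrix.of fun I J => if Setoid.ker (Sum.elim I J) = π then (1 : ℝ) else 0 with hF
  -- Emat is the sum of F over coarser partitions
  have hEF : ∀ π : Setoid (Fin l ⊕ Fin k),
      Emat n l k π = ∑ ρ ∈ Finset.univ.filter (fun ρ => π ≤ ρ), F ρ := by
    intro π
    ext I J
    rw [Matrix.sum_apply]
    simp only [hF, Matrix.of_apply, Emat]
    rw [Finset.sum_ite_eq (Finset.univ.filter (fun ρ => π ≤ ρ))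
      (Setoid.ker (Sum.elim I J)) (fun _ => (1 : ℝ))]
    simp only [Finset.mem_filter, Finset.mem_univ, true_and]
    have hiff : (∀ x y, π.r x y → Sum.elim I J x = Sum.elim I J y) ↔
        (π ≤ Setoid.ker (Sum.elim I J)) := by
      constructor
      · intro h x y hxy; exact h x y hxy
      · intro hle x y hxy; exact hle hxy
    rw [if_congr hiff rfl rfl]
  -- each F π lies in the span of the Emat's
  have hFspan : ∀ π : Setoid (Fin l ⊕ Fin k),
      F π ∈ Submodule.span ℝ (Set.range (Emat n l k)) := by
    intro π
    refine WellFounded.induction (C := fun π => F π ∈ Submodule.span ℝ (Set.range (Emat n l k)))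
      (wellFounded_gt (α := Setoid (Fin l ⊕ Fin k))) π ?_
    intro π ih
    · have hsplit : Finset.univ.filter (fun ρ => π ≤ ρ) =
          insert π (Finset.univ.filter (fun ρ => π < ρ)) := by
        ext ρ
        simp only [Finset.mem_filter, Finset.mem_univ, true_and, Finset.mem_insert]
        rw [le_iff_lt_or_eq]
        tauto
      have hnot : π ∉ Finset.univ.filter (fun ρ => π < ρ) := by
        simp [lt_irrefl]
      have hsum := hEF π
      rw [hsplit, Finset.sum_insert hnot] at hsum
      have : F π = Emat n l k π - ∑ ρ ∈ Finset.univ.filter (fun ρ => π < ρ), F ρ := by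
        rw [hsum]; abel
      rw [this]
      refine sub_mem (Submodule.subset_span ⟨π, rfl⟩) (Submodule.sum_mem _ ?_)
      intro ρ hρ
      exact ih ρ (Finset.mem_filter.mp hρ).2
  -- coefficient function
  set w : Setoid (Fin l ⊕ Fin k) → ℝ := fun π =>
    if h : ∃ p : (Fin l → Fin n) × (Fin k → Fin n), Setoid.ker (Sum.elim p.1 p.2) = π
    then M h.choose.1 h.choose.2 else 0 with hw
  -- M is the corresponding combination of the F's
  have hMF : M = ∑ π : Setoid (Fin l ⊕ Fin k), w π • F π := by
    ext I J
    rw [Matrix.sum_apply]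
    simp only [Matrix.smul_apply, hF, Matrix.of_apply, smul_eq_mul, mul_ite, mul_one, mul_zero]
    rw [Finset.sum_ite_eq Finset.univ (Setoid.ker (Sum.elim I J)) w]
    simp only [Finset.mem_univ, if_true]
    have hex : ∃ p : (Fin l → Fin n) × (Fin k → Fin n),
        Setoid.ker (Sum.elim p.1 p.2) = Setoid.ker (Sum.elim I J) := ⟨(I, J), rfl⟩
    rw [hw]
    simp only [dif_pos hex]
    obtain ⟨σ, hσ⟩ := exists_perm_comp _ _ hex.choose_spec
    have hI : I = σ ∘ hex.choose.1 := by
      funext i; exact congrFun hσ (Sum.inl i)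
    have hJ : J = σ ∘ hex.choose.2 := by
      funext j; exact congrFun hσ (Sum.inr j)
    have hfin := hM' σ hex.choose.1 hex.choose.2
    rw [← hI, ← hJ] at hfin
    exact hfin
  -- conclude via the span of the range
  have hmem : M ∈ Submodule.span ℝ (Set.range (Emat n l k)) := by
    rw [hMF]
    exact Submodule.sum_mem _ fun π _ => Submodule.smul_mem _ _ (hFspan π)
  have : M ∈ LinearMap.range (Theta n l k) := by
    rw [Theta, Finsupp.range_linearCombination]
    exact hmem
  exact this
end

section
/- Every 0-1 matrix E_π associated to a set partition π of [l+k] can be written as P_l · E_{π'} · P_k, where P_l and P_k are permutation matrices on the tensor factors (images of permutations in S_l and S_k acting by permuting tensor positions) and π' is a planar set partition (one whose diagram can be drawn without crossings). -/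
open scoped Classical

/-- The position of each vertex of a `(k,l)`-partition diagram when the vertices are
arranged around a circle: the `l` top vertices left to right, then the `k` bottom
vertices right to left. -/
def circPos (l k : ℕ) : (Fin l ⊕ Fin k) → ℕ :=
  Sum.elim (fun i => (i : ℕ)) (fun j => l + (k - 1 - (j : ℕ)))

/-- A `(k,l)`-partition diagram is planar (can be drawn with no two connected components
crossing) iff the partition is noncrossing with respect to the circular order on the
vertices. -/
def IsPlanar (l k : ℕ) (π : Setoid (Fin l ⊕ Fin k)) : Prop :=
  ¬ ∃ a b c d : Fin l ⊕ Fin k,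
      circPos l k a < circPos l k b ∧ circPos l k b < circPos l k c ∧
      circPos l k c < circPos l k d ∧ π.r a c ∧ π.r b d ∧ ¬ π.r a b

/-- The matrix of a permutation `σ ∈ S_l` acting on `(ℝⁿ)^{⊗l}` by permuting the tensor
factors. -/
noncomputable def permFactorMat (n l : ℕ) (σ : Equiv.Perm (Fin l)) :
    Matrix (Fin l → Fin n) (Fin l → Fin n) ℝ :=
  Matrix.of fun I J => if J = I ∘ σ then 1 else 0

namespace PlanarFactorAux

variable {l k : ℕ}

theorem circPos_lt (v : Fin l ⊕ Fin k) : circPos l k v < l + k := by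
  rcases v with i | j
  · have := i.isLt; simp [circPos]; omega
  · have := j.isLt; simp [circPos]; omega

theorem circPos_injective : Function.Injective (circPos l k) := by
  rintro (i | j) (i' | j') h
  · simpa [circPos, Fin.val_injective.eq_iff] using h
  · have := i.isLt; simp [circPos] at h; omega
  · have := i'.isLt; simp [circPos] at h; omega
  · have hj := j.isLt; have hj' := j'.isLt
    simp only [circPos, Sum.elim_inr] at h
    have : (j : ℕ) = j' := by omega
    exact congrArg Sum.inr (Fin.ext this)

variable (π : Setoid (Fin l ⊕ Fin k))

/-- The minimal `circPos` value over the block of `v`. -/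
noncomputable def rep (v : Fin l ⊕ Fin k) : ℕ :=
  ((Finset.univ.filter fun w => π.r v w).image (circPos l k)).min'
    ⟨circPos l k v, Finset.mem_image_of_mem _
      (Finset.mem_filter.2 ⟨Finset.mem_univ _, π.iseqv.refl v⟩)⟩

theorem rep_lt (v : Fin l ⊕ Fin k) : rep π v < l + k := by
  have h : rep π v ∈ (Finset.univ.filter fun w => π.r v w).image (circPos l k) :=
    Finset.min'_mem _ _
  obtain ⟨w, _, hw⟩ := Finset.mem_image.1 h
  rw [← hw]; exact circPos_lt w

theorem rep_eq_of_rel {v w : Fin l ⊕ Fin k} (h : π.r v w) : rep π v = rep π w := by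
  have : (Finset.univ.filter fun x => π.r v x) = Finset.univ.filter fun x => π.r w x := by
    ext x
    simp only [Finset.mem_filter, Finset.mem_univ, true_and]
    exact ⟨fun hx => π.iseqv.trans (π.iseqv.symm h) hx, fun hx => π.iseqv.trans h hx⟩
  unfold rep
  congr 1
  rw [this]

theorem rel_of_rep_eq {v w : Fin l ⊕ Fin k} (h : rep π v = rep π w) : π.r v w := by
  have hv : rep π v ∈ (Finset.univ.filter fun x => π.r v x).image (circPos l k) :=
    Finset.min'_mem _ _
  have hw : rep π w ∈ (Finset.univ.filter fun x => π.r w x).image (circPos l k) :=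
    Finset.min'_mem _ _
  obtain ⟨v', hv', hv2⟩ := Finset.mem_image.1 hv
  obtain ⟨w', hw', hw2⟩ := Finset.mem_image.1 hw
  have hv' := (Finset.mem_filter.1 hv').2
  have hw' := (Finset.mem_filter.1 hw').2
  have : v' = w' := circPos_injective (by rw [hv2, hw2, h])
  subst this
  exact π.iseqv.trans hv' (π.iseqv.symm hw')

/-- A vertex whose block contains both top and bottom vertices. -/
def Mixed (v : Fin l ⊕ Fin k) : Prop :=
  (∃ i : Fin l, π.r v (Sum.inl i)) ∧ (∃ j : Fin k, π.r v (Sum.inr j))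

theorem mixed_iff_of_rel {v w : Fin l ⊕ Fin k} (h : π.r v w) : Mixed π v ↔ Mixed π w := by
  unfold Mixed
  constructor
  · rintro ⟨⟨i, hi⟩, ⟨j, hj⟩⟩
    exact ⟨⟨i, π.iseqv.trans (π.iseqv.symm h) hi⟩, ⟨j, π.iseqv.trans (π.iseqv.symm h) hj⟩⟩
  · rintro ⟨⟨i, hi⟩, ⟨j, hj⟩⟩
    exact ⟨⟨i, π.iseqv.trans h hi⟩, ⟨j, π.iseqv.trans h hj⟩⟩

/-- Sorting key for top vertices: pure-top blocks first (ordered by `rep`), then mixed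
blocks ordered by `rep` ascending. -/
noncomputable def keyTop (i : Fin l) : ℕ :=
  (if Mixed π (Sum.inl i) then l + k else 0) + rep π (Sum.inl i)

/-- Sorting key for bottom vertices: mixed blocks first, ordered by `rep` descending,
then pure-bottom blocks (ordered by `rep`). -/
noncomputable def keyBot (j : Fin k) : ℕ :=
  (if Mixed π (Sum.inr j) then 0 else l + k) +
    (if Mixed π (Sum.inr j) then l + k - 1 - rep π (Sum.inr j) else rep π (Sum.inr j))

theorem keyTop_eq_of_rel {i i' : Fin l} (h : π.r (Sum.inl i) (Sum.inl i')) :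
    keyTop π i = keyTop π i' := by
  unfold keyTop
  rw [rep_eq_of_rel π h]
  by_cases hm : Mixed π (Sum.inl i)
  · rw [if_pos hm, if_pos ((mixed_iff_of_rel π h).1 hm)]
  · rw [if_neg hm, if_neg (fun h' => hm ((mixed_iff_of_rel π h).2 h'))]

theorem keyBot_eq_of_rel {j j' : Fin k} (h : π.r (Sum.inr j) (Sum.inr j')) :
    keyBot π j = keyBot π j' := by
  unfold keyBot
  rw [rep_eq_of_rel π h]
  by_cases hm : Mixed π (Sum.inr j)
  · have hm' := (mixed_iff_of_rel π h).1 hm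
    rw [if_pos hm, if_pos hm, if_pos hm', if_pos hm']
  · have hm' : ¬ Mixed π (Sum.inr j') := fun h' => hm ((mixed_iff_of_rel π h).2 h')
    rw [if_neg hm, if_neg hm, if_neg hm', if_neg hm']

theorem rep_eq_of_keyTop_eq {i i' : Fin l} (h : keyTop π i = keyTop π i') :
    rep π (Sum.inl i) = rep π (Sum.inl i') := by
  have h1 := rep_lt π (Sum.inl i)
  have h2 := rep_lt π (Sum.inl i')
  unfold keyTop at h
  split_ifs at h <;> omega

theorem rep_eq_of_keyBot_eq {j j' : Fin k} (h : keyBot π j = keyBot π j') :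
    rep π (Sum.inr j) = rep π (Sum.inr j') := by
  have h1 := rep_lt π (Sum.inr j)
  have h2 := rep_lt π (Sum.inr j')
  unfold keyBot at h
  split_ifs at h <;> omega

end PlanarFactorAux

set_option maxHeartbeats 1000000 in
open PlanarFactorAux in
/-- Every matrix `E_π` factors as `P_l · E_{π'} · P_k` with `π'` planar and `P_l`, `P_k`
the matrices of permutations of the tensor factors. -/
theorem Emat_factor_planar (n l k : ℕ) (π : Setoid (Fin l ⊕ Fin k)) :
    ∃ (σ : Equiv.Perm (Fin l)) (τ : Equiv.Perm (Fin k)) (π' : Setoid (Fin l ⊕ Fin k)),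
      IsPlanar l k π' ∧
      Emat n l k π = permFactorMat n l σ * Emat n l k π' * permFactorMat n k τ := by
  -- sort the top and bottom vertices by the keys
  set σ' : Equiv.Perm (Fin l) := Tuple.sort (keyTop π) with hσ'def
  set τ' : Equiv.Perm (Fin k) := Tuple.sort (keyBot π) with hτ'def
  have hσmono : Monotone (keyTop π ∘ σ') := Tuple.monotone_sort (keyTop π)
  have hτmono : Monotone (keyBot π ∘ τ') := Tuple.monotone_sort (keyBot π)
  -- key monotonicity along positions
  have keyTop_mono : ∀ i i' : Fin l, ((σ'⁻¹ i : Fin l) : ℕ) ≤ ((σ'⁻¹ i' : Fin l) : ℕ) →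
      keyTop π i ≤ keyTop π i' := by
    intro i i' h
    have := hσmono (show σ'⁻¹ i ≤ σ'⁻¹ i' from h)
    simpa using this
  have keyBot_mono : ∀ j j' : Fin k, ((τ'⁻¹ j : Fin k) : ℕ) ≤ ((τ'⁻¹ j' : Fin k) : ℕ) →
      keyBot π j ≤ keyBot π j' := by
    intro j j' h
    have := hτmono (show τ'⁻¹ j ≤ τ'⁻¹ j' from h)
    simpa using this
  refine ⟨σ', τ'⁻¹.trans Fin.revPerm, ?_, ?_, ?_⟩
  · -- π' : pull back π along the permutations
    exact { r := fun x y => π.r ((Equiv.sumCongr σ' ((τ'⁻¹.trans Fin.revPerm)⁻¹ : Equiv.Perm (Fin k))) x)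
              ((Equiv.sumCongr σ' ((τ'⁻¹.trans Fin.revPerm)⁻¹ : Equiv.Perm (Fin k))) y)
            iseqv := ⟨fun x => π.iseqv.refl _, fun h => π.iseqv.symm h,
              fun h h' => π.iseqv.trans h h'⟩ }
  · -- planarity
    set τ : Equiv.Perm (Fin k) := τ'⁻¹.trans Fin.revPerm with hτdef
    set e : (Fin l ⊕ Fin k) ≃ (Fin l ⊕ Fin k) := Equiv.sumCongr σ' (τ⁻¹ : Equiv.Perm (Fin k))
      with hedef
    set pos : (Fin l ⊕ Fin k) → ℕ :=
      Sum.elim (fun i : Fin l => ((σ'⁻¹ i : Fin l) : ℕ))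
        (fun j : Fin k => l + ((τ'⁻¹ j : Fin k) : ℕ)) with hposdef
    -- position of the image vertex
    have hpos : ∀ a : Fin l ⊕ Fin k, circPos l k a = pos (e a) := by
      rintro (i | j)
      · simp [circPos, hedef, hposdef]
      · simp only [circPos, Sum.elim_inr, hedef, Equiv.sumCongr_apply, Sum.map_inr, hposdef]
        have h2 : τ'⁻¹ (τ⁻¹ j) = Fin.rev j := by
          simp [hτdef, Equiv.Perm.inv_def, Equiv.symm_trans_apply]
        rw [h2]
        have h1 : (Fin.rev j : ℕ) = k - 1 - (j : ℕ) := by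
          have := j.isLt; rw [Fin.val_rev]; omega
        omega
    rintro ⟨a, b, c, d, h1, h2, h3, hac, hbd, hab⟩
    simp only [hpos a, hpos b, hpos c, hpos d] at h1 h2 h3
    -- rename the images
    set A := e a with hA
    set B := e b with hB
    set C := e c with hC
    set D := e d with hD
    change π.r A C at hac
    change π.r B D at hbd
    change ¬ π.r A B at hab
    clear_value A B C D
    -- top positions are `< l`, bottom positions are `≥ l`
    have postop : ∀ i : Fin l, pos (Sum.inl i) < l := fun i => by
      simp [hposdef]
    have posbot : ∀ j : Fin k, l ≤ pos (Sum.inr j) := fun j => by simp [hposdef]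
    apply hab
    rcases C with iC | jC
    · -- A, B, C are all top vertices
      rcases B with iB | jB
      · rcases A with iA | jA
        · have kAB : keyTop π iA ≤ keyTop π iB := by
            apply keyTop_mono; simp only [hposdef, Sum.elim_inl] at h1; omega
          have kBC : keyTop π iB ≤ keyTop π iC := by
            apply keyTop_mono; simp only [hposdef, Sum.elim_inl] at h2; omega
          have kAC : keyTop π iA = keyTop π iC := keyTop_eq_of_rel π hac
          have : keyTop π iA = keyTop π iB := by omega
          exact rel_of_rep_eq π (rep_eq_of_keyTop_eq π this)
        · exact absurd (lt_of_lt_of_le (h1.trans h2) (postop iC).le) (not_lt.2 (posbot jA))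
      · exact absurd (lt_of_lt_of_le h2 (postop iC).le) (not_lt.2 (posbot jB))
    · rcases B with iB | jB
      · -- A, B top; C, D bottom
        rcases A with iA | jA
        · rcases D with iD | jD
          · exact absurd (lt_of_lt_of_le h3 (postop iD).le) (not_lt.2 (posbot jC))
          · -- the main mixed-block case
            have mA : PlanarFactorAux.Mixed π (Sum.inl iA) :=
              ⟨⟨iA, π.iseqv.refl _⟩, ⟨jC, hac⟩⟩
            have mB : PlanarFactorAux.Mixed π (Sum.inl iB) :=
              ⟨⟨iB, π.iseqv.refl _⟩, ⟨jD, hbd⟩⟩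
            have mC : PlanarFactorAux.Mixed π (Sum.inr jC) :=
              (mixed_iff_of_rel π hac).1 mA
            have mD : PlanarFactorAux.Mixed π (Sum.inr jD) :=
              (mixed_iff_of_rel π hbd).1 mB
            have kAB : keyTop π iA ≤ keyTop π iB := by
              apply keyTop_mono; simp only [hposdef, Sum.elim_inl] at h1; omega
            have kCD : keyBot π jC ≤ keyBot π jD := by
              apply keyBot_mono; simp only [hposdef, Sum.elim_inr] at h3; omega
            have rAB : rep π (Sum.inl iA) ≤ rep π (Sum.inl iB) := by
              unfold PlanarFactorAux.keyTop at kAB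
              rw [if_pos mA, if_pos mB] at kAB; omega
            have rDC : rep π (Sum.inr jD) ≤ rep π (Sum.inr jC) := by
              unfold PlanarFactorAux.keyBot at kCD
              rw [if_pos mC, if_pos mC, if_pos mD, if_pos mD] at kCD
              have hC' := rep_lt π (Sum.inr jC)
              have hD' := rep_lt π (Sum.inr jD)
              omega
            have rAC : rep π (Sum.inl iA) = rep π (Sum.inr jC) := rep_eq_of_rel π hac
            have rBD : rep π (Sum.inl iB) = rep π (Sum.inr jD) := rep_eq_of_rel π hbd
            exact rel_of_rep_eq π (by omega)
        · exact absurd (lt_of_lt_of_le h1 (postop iB).le) (not_lt.2 (posbot jA))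
      · -- B, C, D are all bottom vertices
        rcases D with iD | jD
        · exact absurd (lt_of_lt_of_le h3 (postop iD).le) (not_lt.2 (posbot jC))
        · have kBC : keyBot π jB ≤ keyBot π jC := by
            apply keyBot_mono; simp only [hposdef, Sum.elim_inr] at h2; omega
          have kCD : keyBot π jC ≤ keyBot π jD := by
            apply keyBot_mono; simp only [hposdef, Sum.elim_inr] at h3; omega
          have kBD : keyBot π jB = keyBot π jD := keyBot_eq_of_rel π hbd
          have : keyBot π jB = keyBot π jC := by omega
          have hBC : π.r (Sum.inr jB) (Sum.inr jC) :=
            rel_of_rep_eq π (rep_eq_of_keyBot_eq π this)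
          exact π.iseqv.trans hac (π.iseqv.symm hBC)
  · -- the matrix identity
    set τ : Equiv.Perm (Fin k) := τ'⁻¹.trans Fin.revPerm with hτdef
    set e : (Fin l ⊕ Fin k) ≃ (Fin l ⊕ Fin k) := Equiv.sumCongr σ' (τ⁻¹ : Equiv.Perm (Fin k))
      with hedef
    funext I J
    have hleft : ∀ (M : Matrix (Fin l → Fin n) (Fin k → Fin n) ℝ) (J' : Fin k → Fin n),
        (permFactorMat n l σ' * M) I J' = M (I ∘ σ') J' := by
      intro M J'
      simp only [Matrix.mul_apply, permFactorMat, Matrix.of_apply]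
      rw [Finset.sum_eq_single (I ∘ ⇑σ')]
      · simp
      · intro K _ hK; simp [hK]
      · simp
    have hright : ∀ (M : Matrix (Fin l → Fin n) (Fin k → Fin n) ℝ),
        (M * permFactorMat n k τ) I J = M I (J ∘ ⇑τ⁻¹) := by
      intro M
      simp only [Matrix.mul_apply, permFactorMat, Matrix.of_apply]
      rw [Finset.sum_eq_single (J ∘ ⇑τ⁻¹)]
      · rw [if_pos]
        · ring
        · funext x; simp
      · intro K _ hK
        rw [if_neg, mul_zero]
        intro hJ
        apply hK
        funext x
        rw [hJ]
        simp
      · simp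
    rw [hright, hleft]
    have hconv : ∀ x : Fin l ⊕ Fin k,
        Sum.elim (I ∘ ⇑σ') (J ∘ ⇑τ⁻¹) x = Sum.elim I J (e x) := by
      rintro (i | j) <;> rfl
    show (if ∀ x y, π.r x y → Sum.elim I J x = Sum.elim I J y then (1:ℝ) else 0) =
      (if ∀ x y, π.r (e x) (e y) →
          Sum.elim (I ∘ ⇑σ') (J ∘ ⇑τ⁻¹) x = Sum.elim (I ∘ ⇑σ') (J ∘ ⇑τ⁻¹) y then (1:ℝ) else 0)
    congr 1
    simp only [hconv]
    rw [eq_iff_iff]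
    constructor
    · intro h x y hxy
      exact h _ _ hxy
    · intro h x y hxy
      have := h (e.symm x) (e.symm y)
      simp only [Equiv.apply_symm_apply] at this
      exact this hxy
end

section
/- For the orthogonal group O(n) acting diagonally on tensor powers of ℝⁿ, for each perfect matching β of [l+k] (a (k,l)-Brauer diagram), the matrix E_β with (I,J) entry the product over pairs {x,y} ∈ β of the Kronecker delta of the corresponding indices is O(n)-equivariant. -/
open scoped Classical

/-- The matrix of the diagonal action of `A ∈ GL(n,ℝ)` on the `k`-th tensor power of
`ℝⁿ` (the `k`-fold Kronecker power of `A`), in the basis of tuples. -/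
noncomputable def tpowMat (n k : ℕ) (A : Matrix (Fin n) (Fin n) ℝ) :
    Matrix (Fin k → Fin n) (Fin k → Fin n) ℝ :=
  Matrix.of fun I J => ∏ t : Fin k, A (I t) (J t)

/-- Key combinatorial lemma: a sum over colorings constant on the classes of a setoid
factorizes as a product over the classes. -/
lemma key_factor {α : Type*} [Fintype α] [DecidableEq α] (π : Setoid α) (n : ℕ) (f : α → Fin n → ℝ) :
    (∑ v : α → Fin n, (if ∀ x y, π.r x y → v x = v y then (1:ℝ) else 0) * ∏ x, f x (v x))
      = ∏ c : Quotient π, ∑ a : Fin n,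
          ∏ x ∈ Finset.univ.filter (fun x => Quotient.mk π x = c), f x a := by
  classical
  rw [Finset.prod_univ_sum, Fintype.piFinset_univ]
  have h1 : (∑ v : α → Fin n, (if ∀ x y, π.r x y → v x = v y then (1:ℝ) else 0) * ∏ x, f x (v x))
      = ∑ v ∈ Finset.univ.filter (fun v : α → Fin n => ∀ x y, π.r x y → v x = v y),
          ∏ x, f x (v x) := by
    rw [Finset.sum_filter]
    simp [ite_mul]
  rw [h1]
  refine Finset.sum_bij'
    (i := fun (v : α → Fin n) (hv : v ∈ Finset.univ.filter
        (fun v : α → Fin n => ∀ x y, π.r x y → v x = v y)) =>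
      (fun c : Quotient π => Quotient.liftOn c v
        (fun a b hab => (Finset.mem_filter.mp hv).2 a b hab)))
    (j := fun (h : Quotient π → Fin n) _ => fun x => h (Quotient.mk π x))
    ?_ ?_ ?_ ?_ ?_
  · intro v hv; exact Finset.mem_univ _
  · intro h hh
    simp only [Finset.mem_filter, Finset.mem_univ, true_and]
    intro x y hxy
    have : Quotient.mk π x = Quotient.mk π y := Quotient.sound hxy
    simp [this]
  · intro v hv; rfl
  · intro h hh
    funext c
    induction c using Quotient.ind
    rfl
  · intro v hv
    rw [← Finset.prod_fiberwise (Finset.univ) (fun x => Quotient.mk π x)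
      (fun x => f x (v x))]
    refine Finset.prod_congr rfl fun c _ => Finset.prod_congr rfl fun x hx => ?_
    have hc : Quotient.mk π x = c := (Finset.mem_filter.mp hx).2
    subst hc
    rfl

/-- Entries of `Aᵀ * A` for an orthogonal matrix. -/
lemma orth_col {n : ℕ} {A : Matrix (Fin n) (Fin n) ℝ}
    (hA : A ∈ Matrix.orthogonalGroup (Fin n) ℝ) (i j : Fin n) :
    (∑ a : Fin n, A a i * A a j) = if i = j then (1:ℝ) else 0 := by
  have h : star A * A = 1 := Matrix.mem_unitaryGroup_iff'.mp hA
  have := congrFun (congrFun h i) j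
  simp only [Matrix.mul_apply, Matrix.star_apply, Matrix.one_apply, star, RCLike.star_def] at this ⊢
  simpa [Matrix.conjTranspose_apply, mul_comm] using this

/-- Entries of `A * Aᵀ` for an orthogonal matrix. -/
lemma orth_row {n : ℕ} {A : Matrix (Fin n) (Fin n) ℝ}
    (hA : A ∈ Matrix.orthogonalGroup (Fin n) ℝ) (i j : Fin n) :
    (∑ a : Fin n, A i a * A j a) = if i = j then (1:ℝ) else 0 := by
  have h : A * star A = 1 := Matrix.mem_unitaryGroup_iff.mp hA
  have := congrFun (congrFun h i) j
  simp only [Matrix.mul_apply, Matrix.star_apply, Matrix.one_apply] at this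
  simpa [Matrix.conjTranspose_apply] using this

lemma sum_split {l k n : ℕ} (g : ((Fin l ⊕ Fin k) → Fin n) → ℝ) :
    (∑ v : (Fin l ⊕ Fin k) → Fin n, g v)
      = ∑ vl : Fin l → Fin n, ∑ vr : Fin k → Fin n, g (Sum.elim vl vr) := by
  rw [← Equiv.sum_comp (Equiv.sumArrowEquivProdArrow (Fin l) (Fin k) (Fin n)).symm g,
    Fintype.sum_prod_type]
  refine Finset.sum_congr rfl fun vl _ => Finset.sum_congr rfl fun vr _ => ?_
  rfl

/-- For the orthogonal group `O(n)` acting diagonally on tensor powers of `ℝⁿ`, the matrix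
`E_β` of any perfect matching `β` of `[l+k]` (a `(k,l)`-Brauer diagram, i.e. a set
partition all of whose blocks have size exactly two) is `O(n)`-equivariant. -/
theorem Emat_brauer_orthogonal_equivariant (n l k : ℕ) (β : Setoid (Fin l ⊕ Fin k))
    (hβ : ∀ x, ∃ y, x ≠ y ∧ β.r x y ∧ ∀ z, β.r x z → z = x ∨ z = y)
    (A : Matrix (Fin n) (Fin n) ℝ) (hA : A ∈ Matrix.orthogonalGroup (Fin n) ℝ) :
    Emat n l k β * tpowMat n k A = tpowMat n l A * Emat n l k β := by
  classical
  ext I J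
  set fL : (Fin l ⊕ Fin k) → Fin n → ℝ :=
    Sum.elim (fun s a => if I s = a then (1:ℝ) else 0) (fun t a => A a (J t)) with hfL
  set fR : (Fin l ⊕ Fin k) → Fin n → ℝ :=
    Sum.elim (fun s a => A (I s) a) (fun t a => if a = J t then (1:ℝ) else 0) with hfR
  -- indicator abbreviation
  set ind : ((Fin l ⊕ Fin k) → Fin n) → ℝ :=
    fun v => if ∀ x y, β.r x y → v x = v y then (1:ℝ) else 0 with hind
  have hL : (Emat n l k β * tpowMat n k A) I J
      = ∑ v : (Fin l ⊕ Fin k) → Fin n, ind v * ∏ x, fL x (v x) := by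
    rw [sum_split (fun v => ind v * ∏ x, fL x (v x))]
    rw [Finset.sum_comm]
    rw [Matrix.mul_apply]
    refine Finset.sum_congr rfl fun vr _ => ?_
    have step : ∀ vl : Fin l → Fin n,
        ind (Sum.elim vl vr) * ∏ x, fL x (Sum.elim vl vr x)
          = if vl = I then ind (Sum.elim vl vr) * ∏ t, A (vr t) (J t) else 0 := by
      intro vl
      rw [Fintype.prod_sum_type]
      simp only [Sum.elim_inl, Sum.elim_inr]
      have hδ : (∏ s : Fin l, fL (Sum.inl s) (vl s)) = if vl = I then (1:ℝ) else 0 := by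
        simp only [hfL, Sum.elim_inl]
        rw [Finset.prod_boole]
        simp [funext_iff, eq_comm]
      rw [hδ]
      have h2 : (∏ x : Fin k, fL (Sum.inr x) (vr x)) = ∏ t, A (vr t) (J t) := rfl
      rw [h2]
      by_cases hv : vl = I <;> simp [hv, mul_comm, mul_assoc, mul_left_comm]
    rw [Finset.sum_congr rfl (fun vl _ => step vl), Finset.sum_ite_eq' Finset.univ I
      (fun vl => ind (Sum.elim vl vr) * ∏ t, A (vr t) (J t))]
    rw [if_pos (Finset.mem_univ _)]
    rfl
  have hR : (tpowMat n l A * Emat n l k β) I J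
      = ∑ v : (Fin l ⊕ Fin k) → Fin n, ind v * ∏ x, fR x (v x) := by
    rw [sum_split (fun v => ind v * ∏ x, fR x (v x))]
    rw [Matrix.mul_apply]
    refine Finset.sum_congr rfl fun vl _ => ?_
    have step : ∀ vr : Fin k → Fin n,
        ind (Sum.elim vl vr) * ∏ x, fR x (Sum.elim vl vr x)
          = if vr = J then ind (Sum.elim vl vr) * ∏ s, A (I s) (vl s) else 0 := by
      intro vr
      rw [Fintype.prod_sum_type]
      simp only [Sum.elim_inl, Sum.elim_inr]
      have hδ : (∏ t : Fin k, fR (Sum.inr t) (vr t)) = if vr = J then (1:ℝ) else 0 := by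
        simp only [hfR, Sum.elim_inr]
        rw [Finset.prod_boole]
        simp [funext_iff]
      rw [hδ]
      have h2 : (∏ x : Fin l, fR (Sum.inl x) (vl x)) = ∏ s, A (I s) (vl s) := rfl
      rw [h2]
      by_cases hv : vr = J <;> simp [hv, mul_comm, mul_assoc, mul_left_comm]
    rw [Finset.sum_congr rfl (fun vr _ => step vr), Finset.sum_ite_eq' Finset.univ J
      (fun vr => ind (Sum.elim vl vr) * ∏ s, A (I s) (vl s))]
    rw [if_pos (Finset.mem_univ _), mul_comm]
    rfl
  rw [hL.trans (key_factor β n fL), hR.trans (key_factor β n fR)]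
  refine Finset.prod_congr rfl fun c _ => ?_
  -- the fiber of a class is a pair
  obtain ⟨y, hxy, hrel, huniq⟩ := hβ (Quotient.out c)
  set x := Quotient.out c with hx
  have hcx : Quotient.mk β x = c := Quotient.out_eq c
  have hfiber : Finset.univ.filter (fun z => Quotient.mk β z = c) = {x, y} := by
    ext z
    simp only [Finset.mem_filter, Finset.mem_univ, true_and, Finset.mem_insert,
      Finset.mem_singleton]
    constructor
    · intro hz
      have : β.r x z := Quotient.exact (hcx.trans hz.symm)
      exact huniq z this
    · rintro (rfl | rfl)
      · exact hcx
      · rw [← hcx]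
        exact Quotient.sound (Setoid.symm hrel)
  rw [hfiber]
  have hpair : ∀ g : (Fin l ⊕ Fin k) → Fin n → ℝ, ∀ a : Fin n,
      (∏ z ∈ ({x, y} : Finset (Fin l ⊕ Fin k)), g z a) = g x a * g y a := by
    intro g a
    exact Finset.prod_pair hxy
  simp only [hpair]
  -- now case on the positions of x and y
  clear hfiber hpair hcx hx hxy hrel huniq
  rcases x with s | t <;> rcases y with s' | t' <;>
    simp only [hfL, hfR, Sum.elim_inl, Sum.elim_inr]
  · rw [orth_row hA]
    simp [eq_comm]
  · simp
  · simp [mul_comm]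
  · rw [orth_col hA]
    simp [eq_comm]
end

section
/- The composition of partition diagram matrices matches diagram composition: for a (k,l)-partition diagram d_{π₁} and an (l,m)-partition diagram d_{π₂}, one has E_{π₂} · E_{π₁} = n^{c(π₂,π₁)} E_{π₂∘π₁}, where π₂∘π₁ is the concatenated set partition and c(π₂,π₁) is the number of connected components removed from the middle row during concatenation. -/
open scoped Classical

section Aux

variable {n m l k : ℕ} {π₂ : Setoid (Fin m ⊕ Fin l)} {π₁ : Setoid (Fin l ⊕ Fin k)}
  {I : Fin m → Fin n} {J : Fin k → Fin n}

private lemma elim_map_inl (I : Fin m → Fin n) (K : Fin l → Fin n) (J : Fin k → Fin n)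
    (a : Fin m ⊕ Fin l) :
    Sum.elim I (Sum.elim K J) (Sum.map id Sum.inl a) = Sum.elim I K a := by
  cases a <;> rfl

private lemma elim_map_inr (I : Fin m → Fin n) (K : Fin l → Fin n) (J : Fin k → Fin n)
    (a : Fin m ⊕ Fin k) :
    Sum.elim I (Sum.elim K J) (Sum.map id Sum.inr a) = Sum.elim I J a := by
  cases a <;> rfl

private lemma const_iff (K : Fin l → Fin n) :
    (∀ x y, (concatSetoid m l k π₂ π₁).r x y →
      Sum.elim I (Sum.elim K J) x = Sum.elim I (Sum.elim K J) y) ↔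
    ((∀ x y, π₂.r x y → Sum.elim I K x = Sum.elim I K y) ∧
     (∀ x y, π₁.r x y → Sum.elim K J x = Sum.elim K J y)) := by
  constructor
  · intro h
    refine ⟨fun x y hxy => ?_, fun x y hxy => ?_⟩
    · have := h _ _ (Relation.EqvGen.rel _ _ (Or.inl ⟨x, y, hxy, rfl, rfl⟩))
      rwa [elim_map_inl, elim_map_inl] at this
    · exact h _ _ (Relation.EqvGen.rel _ _ (Or.inr ⟨x, y, hxy, rfl, rfl⟩))
  · rintro ⟨h2, h1⟩ x y hxy
    replace hxy : Relation.EqvGen (concatRel m l k π₂ π₁) x y := hxy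
    induction hxy with
    | rel a b hab =>
      rcases hab with ⟨a', b', hab, rfl, rfl⟩ | ⟨a', b', hab, rfl, rfl⟩
      · rw [elim_map_inl, elim_map_inl]; exact h2 _ _ hab
      · exact h1 _ _ hab
    | refl => rfl
    | symm _ _ _ ih => exact ih.symm
    | trans _ _ _ _ _ ih1 ih2 => exact ih1.trans ih2

private lemma compat_of_const (K : Fin l → Fin n)
    (hK : ∀ x y, (concatSetoid m l k π₂ π₁).r x y →
      Sum.elim I (Sum.elim K J) x = Sum.elim I (Sum.elim K J) y) :
    ∀ x y, (compDiagram m l k π₂ π₁).r x y → Sum.elim I J x = Sum.elim I J y := by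
  intro x y hxy
  have h : (concatSetoid m l k π₂ π₁).r (Sum.map id Sum.inr x) (Sum.map id Sum.inr y) := hxy
  have := hK _ _ h
  rwa [elim_map_inr, elim_map_inr] at this

private lemma exists_outer {q : Quotient (concatSetoid m l k π₂ π₁)}
    (hq : ¬ ∀ x, Quotient.mk (concatSetoid m l k π₂ π₁) x = q →
      ∃ y : Fin l, x = Sum.inr (Sum.inl y)) :
    ∃ a : Fin m ⊕ Fin k, Quotient.mk (concatSetoid m l k π₂ π₁) (Sum.map id Sum.inr a) = q := by
  push_neg at hq
  obtain ⟨x, hx, hx2⟩ := hq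
  match x with
  | .inl i => exact ⟨.inl i, hx⟩
  | .inr (.inl y) => exact absurd rfl (hx2 y)
  | .inr (.inr j) => exact ⟨.inr j, hx⟩

private lemma count_eq
    (hIJ : ∀ x y, (compDiagram m l k π₂ π₁).r x y → Sum.elim I J x = Sum.elim I J y) :
    Nat.card {K : Fin l → Fin n // ∀ x y, (concatSetoid m l k π₂ π₁).r x y →
      Sum.elim I (Sum.elim K J) x = Sum.elim I (Sum.elim K J) y}
    = n ^ removedCount m l k π₂ π₁ := by
  classical
  set S := concatSetoid m l k π₂ π₁ with hS
  set P : Quotient S → Prop :=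
    fun q => ∀ x, Quotient.mk S x = q → ∃ y : Fin l, x = Sum.inr (Sum.inl y) with hP
  -- given outer data, the value function on the quotient
  let G : ({q // P q} → Fin n) → Quotient S → Fin n := fun h q =>
    if hq : P q then h ⟨q, hq⟩
    else Sum.elim I J (Classical.choose (exists_outer hq))
  -- outer classes have well-defined I/J values
  have houter : ∀ (a : Fin m ⊕ Fin k) (q : Quotient S) (hq : ¬ P q),
      Quotient.mk S (Sum.map id Sum.inr a) = q →
      Sum.elim I J (Classical.choose (exists_outer hq)) = Sum.elim I J a := by
    intro a q hq hqa
    have hspec := Classical.choose_spec (exists_outer hq)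
    apply hIJ
    show S.r _ _
    exact Quotient.exact (hspec.trans hqa.symm)
  have hKG : ∀ (h : {q // P q} → Fin n) (x : Fin m ⊕ (Fin l ⊕ Fin k)),
      Sum.elim I (Sum.elim (fun y => G h (Quotient.mk S (Sum.inr (Sum.inl y)))) J) x
        = G h (Quotient.mk S x) := by
    intro h x
    match x with
    | .inr (.inl y) => rfl
    | .inl i =>
      have hq : ¬ P (Quotient.mk S (Sum.inl i)) := by
        intro hc
        obtain ⟨y, hy⟩ := hc (Sum.inl i) rfl
        exact Sum.inl_ne_inr hy
      show I i = G h (Quotient.mk S (Sum.inl i))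
      simp only [G, dif_neg hq]
      exact (houter (Sum.inl i) _ hq rfl).symm
    | .inr (.inr j) =>
      have hq : ¬ P (Quotient.mk S (Sum.inr (Sum.inr j))) := by
        intro hc
        obtain ⟨y, hy⟩ := hc (Sum.inr (Sum.inr j)) rfl
        exact Sum.inr_ne_inl (Sum.inr.inj hy)
      show J j = G h (Quotient.mk S (Sum.inr (Sum.inr j)))
      simp only [G, dif_neg hq]
      exact (houter (Sum.inr j) _ hq rfl).symm
  let e : {K : Fin l → Fin n // ∀ x y, S.r x y →
      Sum.elim I (Sum.elim K J) x = Sum.elim I (Sum.elim K J) y} ≃ ({q // P q} → Fin n) :=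
    { toFun := fun K q => Quotient.liftOn q.1 (Sum.elim I (Sum.elim K.1 J))
        (fun a b hab => K.2 a b hab)
      invFun := fun h => ⟨fun y => G h (Quotient.mk S (Sum.inr (Sum.inl y))), by
        intro x y hxy
        rw [hKG h x, hKG h y, Quotient.sound hxy]⟩
      left_inv := by
        rintro ⟨K, hK⟩
        apply Subtype.ext
        funext y
        show G (fun q => Quotient.liftOn q.1 (Sum.elim I (Sum.elim K J))
            (fun a b hab => hK a b hab)) (Quotient.mk S (Sum.inr (Sum.inl y))) = K y
        by_cases hq : P (Quotient.mk S (Sum.inr (Sum.inl y)))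
        · simp only [G, dif_pos hq]
          rfl
        · simp only [G, dif_neg hq]
          have hspec := Classical.choose_spec (exists_outer hq)
          set a := Classical.choose (exists_outer hq) with ha
          have h1 : Sum.elim I J a = Sum.elim I (Sum.elim K J) (Sum.map id Sum.inr a) :=
            (elim_map_inr I K J a).symm
          have h2 : Sum.elim I (Sum.elim K J) (Sum.map id Sum.inr a)
              = Sum.elim I (Sum.elim K J) (Sum.inr (Sum.inl y)) :=
            hK _ _ (Quotient.exact hspec)
          exact h1.trans h2
      right_inv := by
        intro h
        funext q
        obtain ⟨q0, hq0⟩ := q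
        obtain ⟨x, rfl⟩ := q0.exists_rep
        obtain ⟨y, rfl⟩ := hq0 x rfl
        show Sum.elim I (Sum.elim _ J) (Sum.inr (Sum.inl y)) = _
        show G h (Quotient.mk S (Sum.inr (Sum.inl y))) = _
        simp only [G, dif_pos hq0] }
  rw [Nat.card_congr e, Nat.card_fun, Nat.card_eq_fintype_card (α := Fin n), Fintype.card_fin]
  rfl

end Aux

/-- Matrix multiplication of the `E` matrices matches diagram composition:
`E_{π₂} · E_{π₁} = n^{c(π₂,π₁)} E_{π₂ ∘ π₁}`. -/
theorem Emat_mul (n m l k : ℕ) (π₂ : Setoid (Fin m ⊕ Fin l)) (π₁ : Setoid (Fin l ⊕ Fin k)) :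
    Emat n m l π₂ * Emat n l k π₁ =
      (n : ℝ) ^ removedCount m l k π₂ π₁ • Emat n m k (compDiagram m l k π₂ π₁) := by
  classical
  ext I J
  simp only [Matrix.mul_apply, Matrix.smul_apply, Emat, Matrix.of_apply, smul_eq_mul]
  have hstep : ∀ K : Fin l → Fin n,
      (if ∀ x y, π₂.r x y → Sum.elim I K x = Sum.elim I K y then (1:ℝ) else 0) *
      (if ∀ x y, π₁.r x y → Sum.elim K J x = Sum.elim K J y then (1:ℝ) else 0) =
      if (∀ x y, (concatSetoid m l k π₂ π₁).r x y →
          Sum.elim I (Sum.elim K J) x = Sum.elim I (Sum.elim K J) y) then 1 else 0 := by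
    intro K
    by_cases h : ∀ x y, (concatSetoid m l k π₂ π₁).r x y →
        Sum.elim I (Sum.elim K J) x = Sum.elim I (Sum.elim K J) y
    · obtain ⟨h2, h1⟩ := (const_iff K).mp h
      rw [if_pos h2, if_pos h1, if_pos h, one_mul]
    · rw [if_neg h]
      by_cases h2 : ∀ x y, π₂.r x y → Sum.elim I K x = Sum.elim I K y
      · by_cases h1 : ∀ x y, π₁.r x y → Sum.elim K J x = Sum.elim K J y
        · exact absurd ((const_iff K).mpr ⟨h2, h1⟩) h
        · rw [if_neg h1, mul_zero]
      · rw [if_neg h2, zero_mul]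
  simp_rw [hstep]
  rw [Finset.sum_boole]
  have hcard : (Finset.univ.filter (fun K : Fin l → Fin n =>
      ∀ x y, (concatSetoid m l k π₂ π₁).r x y →
        Sum.elim I (Sum.elim K J) x = Sum.elim I (Sum.elim K J) y)).card
      = Nat.card {K : Fin l → Fin n // ∀ x y, (concatSetoid m l k π₂ π₁).r x y →
          Sum.elim I (Sum.elim K J) x = Sum.elim I (Sum.elim K J) y} := by
    rw [Nat.card_eq_fintype_card, Fintype.card_subtype]
  by_cases hIJ : ∀ x y, (compDiagram m l k π₂ π₁).r x y → Sum.elim I J x = Sum.elim I J y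
  · rw [if_pos hIJ, mul_one, hcard, count_eq hIJ]
    push_cast
    ring
  · rw [if_neg hIJ, mul_zero, hcard]
    have : IsEmpty {K : Fin l → Fin n // ∀ x y, (concatSetoid m l k π₂ π₁).r x y →
        Sum.elim I (Sum.elim K J) x = Sum.elim I (Sum.elim K J) y} := by
      refine ⟨fun K => hIJ (compat_of_const K.1 K.2)⟩
    rw [Nat.card_of_isEmpty]
    norm_num
end
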